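/- arXiv:1403.7602 — 7 statements merged into one kernel-verified Lean document; each statement's English description precedes it below -/
import Mathlib

section
/- If G is a finite group in which every Cayley graph Cay(G,S) with |S| ≤ 2 is integral (i.e., all eigenvalues of its adjacency matrix are integers), then every non-identity element of G has order 2, 3, 4, or 6. -/
open Real

/-- The Cayley graph of a group `G` with connection set `S`. For a symmetric set `S`
with `1 ∉ S`, `g` and `h` are adjacent iff `h * g⁻¹ ∈ S`. -/
def cayley {G : Type*} [Group G] (S : Set G) : SimpleGraph G :=
  SimpleGraph.fromRel (fun g h => h * g⁻¹ ∈ S)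

/-- A finite graph is integral if all eigenvalues of its adjacency matrix are integers. -/
def IsIntegralGraph {V : Type*} [Finite V] (Γ : SimpleGraph V) : Prop :=
  letI := Fintype.ofFinite V
  letI := Classical.decEq V
  letI : DecidableRel Γ.Adj := Classical.decRel _
  ∀ μ ∈ spectrum ℝ (Γ.adjMatrix ℝ), ∃ z : ℤ, (z : ℝ) = μ

theorem orders_of_G2_groups (G : Type*) [Group G] [Finite G]
    (hG : ∀ S : Finset G, (1 : G) ∉ S → (∀ s ∈ S, s⁻¹ ∈ S) → S.card ≤ 2 →
      IsIntegralGraph (cayley (S : Set G))) :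
    ∀ g : G, g ≠ 1 → orderOf g ∈ ({2, 3, 4, 6} : Set ℕ) := by
  intro g hg
  by_contra hmem
  simp only [Set.mem_insert_iff, Set.mem_singleton_iff, not_or] at hmem
  obtain ⟨h2, h3, h4, h6⟩ := hmem
  set n := orderOf g with hn
  have hn1 : n ≠ 1 := by
    simpa [hn, orderOf_eq_one_iff] using hg
  have hnpos : 0 < n := orderOf_pos g
  have hn5 : 5 ≤ n := by omega
  -- g ≠ g⁻¹
  have hgginv : g ≠ g⁻¹ := by
    intro h
    have : g ^ (2 : ℕ) = 1 := by
      rw [pow_two]; nth_rewrite 2 [h]; exact mul_inv_cancel g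
    have := orderOf_dvd_of_pow_eq_one this
    have := Nat.le_of_dvd (by norm_num) this
    omega
  have hginv1 : g⁻¹ ≠ 1 := by simpa using hg
  letI : Fintype G := Fintype.ofFinite G
  letI : DecidableEq G := Classical.decEq G
  -- the connection set
  set S : Finset G := {g, g⁻¹} with hS
  have h1S : (1 : G) ∉ S := by
    simp [hS, hg.symm, hginv1.symm]
  have hsymm : ∀ s ∈ S, s⁻¹ ∈ S := by
    intro s hs
    simp only [hS, Finset.mem_insert, Finset.mem_singleton] at hs ⊢
    rcases hs with rfl | rfl <;> simp
  letI : DecidableRel (cayley (S : Set G)).Adj := Classical.decRel _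
  have hcard : S.card ≤ 2 := (Finset.card_insert_le _ _).trans (by simp)
  have hint := hG S h1S hsymm hcard
  unfold IsIntegralGraph at hint
  -- the eigenvalue
  set μ : ℝ := 2 * Real.cos (2 * π / n) with hμdef
  -- the eigenvector
  haveI : DecidablePred (fun x : G => ∃ k : ℤ, g ^ k = x) := fun x => Classical.propDecidable _
  set v : G → ℝ := fun x =>
    if h : ∃ k : ℤ, g ^ k = x then Real.cos (2 * π * h.choose / n) else 0 with hvdef
  have hnne : (n : ℝ) ≠ 0 := Nat.cast_ne_zero.mpr (by omega)
  have hcoseq : ∀ a b : ℤ, g ^ a = g ^ b →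
      Real.cos (2 * π * a / n) = Real.cos (2 * π * b / n) := by
    intro a b hab
    have h1 : g ^ (a - b) = 1 := by
      rw [zpow_sub, hab, mul_inv_cancel]
    obtain ⟨m, hm⟩ := orderOf_dvd_iff_zpow_eq_one.mpr h1
    have ha : (a : ℝ) = b + n * m := by
      have : (a : ℝ) - b = n * m := by exact_mod_cast congrArg (Int.cast : ℤ → ℝ) hm
      linarith
    have : 2 * π * a / n = 2 * π * b / n + (m : ℝ) * (2 * π) := by
      rw [ha]; field_simp
    rw [this, Real.cos_add_int_mul_two_pi]
  have hv : ∀ k : ℤ, v (g ^ k) = Real.cos (2 * π * k / n) := by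
    intro k
    have h : ∃ j : ℤ, g ^ j = g ^ k := ⟨k, rfl⟩
    simp only [hvdef, dif_pos h]
    exact hcoseq _ _ h.choose_spec
  have hv0 : ∀ x : G, (¬ ∃ k : ℤ, g ^ k = x) → v x = 0 := by
    intro x hx
    simp only [hvdef, dif_neg hx]
  -- eigenvector equation pointwise
  have heig : ∀ x : G, v (g * x) + v (g⁻¹ * x) = μ * v x := by
    intro x
    by_cases h : ∃ k : ℤ, g ^ k = x
    · obtain ⟨k, rfl⟩ := h
      have e1 : g * g ^ k = g ^ (k + 1) := by
        rw [add_comm k 1, zpow_add, zpow_one]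
      have e2 : g⁻¹ * g ^ k = g ^ (k - 1) := by
        rw [sub_eq_neg_add, zpow_add, zpow_neg_one]
      rw [e1, e2, hv, hv, hv]
      have c1 : 2 * π * (↑(k + 1) : ℝ) / n = 2 * π * k / n + 2 * π / n := by
        push_cast; field_simp
      have c2 : 2 * π * (↑(k - 1) : ℝ) / n = 2 * π * k / n - 2 * π / n := by
        push_cast; field_simp
      rw [c1, c2, Real.cos_add, Real.cos_sub, hμdef]
      ring
    · have h1 : ¬ ∃ k : ℤ, g ^ k = g * x := by
        rintro ⟨k, hk⟩
        exact h ⟨k - 1, by rw [sub_eq_neg_add, zpow_add, zpow_neg_one, hk]; group⟩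
      have h2 : ¬ ∃ k : ℤ, g ^ k = g⁻¹ * x := by
        rintro ⟨k, hk⟩
        exact h ⟨k + 1, by rw [add_comm k 1, zpow_add, zpow_one, hk]; group⟩
      rw [hv0 _ h1, hv0 _ h2, hv0 _ h, mul_zero, add_zero]
  have hvne : v ≠ 0 := by
    intro h0
    have h1 : v (g ^ (0 : ℤ)) = 1 := by rw [hv]; simp
    rw [zpow_zero] at h1
    have := congrFun h0 1
    simp only [Pi.zero_apply] at this
    rw [this] at h1
    norm_num at h1
  -- set up matrix instances matching IsIntegralGraph
  -- adjacency description
  have hadj : ∀ x y : G, (cayley (S : Set G)).Adj x y ↔ (y = g * x ∨ y = g⁻¹ * x) := by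
    intro x y
    constructor
    · rintro ⟨hne, h | h⟩
      · simp only [hS, Finset.coe_insert, Finset.coe_singleton, Set.mem_insert_iff,
          Set.mem_singleton_iff] at h
        rcases h with h | h
        · left; rw [← h]; group
        · right; rw [← h]; group
      · simp only [hS, Finset.coe_insert, Finset.coe_singleton, Set.mem_insert_iff,
          Set.mem_singleton_iff] at h
        rcases h with h | h
        · right
          have : x = g * y := by rw [← h]; group
          rw [this]; group
        · left
          have : x = g⁻¹ * y := by rw [← h]; group
          rw [this]; group
    · rintro (rfl | rfl)
      · refine ⟨?_, Or.inl ?_⟩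
        · intro h
          exact hg (mul_right_cancel ((one_mul x).trans h)).symm
        · simp [hS]
      · refine ⟨?_, Or.inl ?_⟩
        · intro h
          exact hginv1 (mul_right_cancel ((one_mul x).trans h)).symm
        · simp [hS]
  have hpairne : ∀ x : G, g * x ≠ g⁻¹ * x := by
    intro x h
    exact hgginv (mul_right_cancel h)
  have hnbhd : ∀ x : G, (cayley (S : Set G)).neighborFinset x = {g * x, g⁻¹ * x} := by
    intro x
    ext y
    simp only [SimpleGraph.mem_neighborFinset, Finset.mem_insert, Finset.mem_singleton]
    rw [hadj]
  -- eigenvector equation for the matrix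
  have hmul : ((cayley (S : Set G)).adjMatrix ℝ).mulVec v = μ • v := by
    funext x
    rw [SimpleGraph.adjMatrix_mulVec_apply, hnbhd, Finset.sum_pair (hpairne x)]
    rw [Pi.smul_apply, smul_eq_mul]
    exact heig x
  -- μ is in the spectrum
  have hev : Module.End.HasEigenvector (Matrix.toLin' ((cayley (S : Set G)).adjMatrix ℝ)) μ v := by
    refine ⟨?_, hvne⟩
    rw [Module.End.mem_eigenspace_iff, Matrix.toLin'_apply, hmul]
  have heval : Module.End.HasEigenvalue (Matrix.toLin' ((cayley (S : Set G)).adjMatrix ℝ)) μ :=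
    Module.End.hasEigenvalue_of_hasEigenvector hev
  have hspec : μ ∈ spectrum ℝ ((cayley (S : Set G)).adjMatrix ℝ) := by
    rw [← AlgEquiv.spectrum_eq (Matrix.toLinAlgEquiv' : Matrix G G ℝ ≃ₐ[ℝ] _)]
    rw [← Module.End.hasEigenvalue_iff_mem_spectrum]
    exact heval
  obtain ⟨z, hz⟩ := hint μ hspec
  -- now derive the contradiction: μ ∈ (0,2) and μ ≠ 1
  have hπ : (0 : ℝ) < π := Real.pi_pos
  have hnR : (5 : ℝ) ≤ n := by exact_mod_cast hn5
  have hxpos : 0 < 2 * π / n := by positivity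
  have hxle : 2 * π / n ≤ 2 * π / 5 := by
    apply div_le_div_of_nonneg_left (by positivity) (by norm_num) hnR
  have hxlt : 2 * π / n < π / 2 := lt_of_le_of_lt hxle (by linarith)
  have hxlepi : 2 * π / n ≤ π := le_trans hxle (by linarith)
  have hcpos : 0 < Real.cos (2 * π / n) :=
    Real.cos_pos_of_mem_Ioo ⟨by linarith, hxlt⟩
  have hclt : Real.cos (2 * π / n) < 1 := by
    have := Real.strictAntiOn_cos (Set.left_mem_Icc.mpr hπ.le)
      ⟨hxpos.le, hxlepi⟩ hxpos
    simpa using this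
  have hne1 : μ ≠ 1 := by
    intro h
    have hc : Real.cos (2 * π / n) = Real.cos (π / 3) := by
      rw [Real.cos_pi_div_three]; rw [hμdef] at h; linarith
    have := Real.injOn_cos ⟨hxpos.le, hxlepi⟩ ⟨by positivity, by linarith⟩ hc
    have hn6 : (n : ℝ) = 6 := by
      field_simp at this
      nlinarith [hπ]
    exact h6 (by exact_mod_cast hn6)
  have h0μ : 0 < μ := by rw [hμdef]; linarith
  have hμ2 : μ < 2 := by rw [hμdef]; linarith
  have hz0 : (0 : ℤ) < z := by exact_mod_cast hz ▸ h0μ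
  have hz2 : z < 2 := by exact_mod_cast hz ▸ hμ2
  have : z = 1 := by omega
  rw [this] at hz
  exact hne1 (by simpa using hz.symm)
end

section
/- If G is a finite group such that every Cayley graph Cay(G,S) with |S| ≤ k is integral, and H is a subgroup of G, then every Cayley graph Cay(H,T) with |T| ≤ k is integral. -/
/-- `μ` is an eigenvalue of the adjacency matrix of the finite graph `Γ`. -/
def IsAdjEigenvalue {V : Type*} [Finite V] (Γ : SimpleGraph V) (μ : ℝ) : Prop :=
  letI := Fintype.ofFinite V
  letI := Classical.decEq V
  letI : DecidableRel Γ.Adj := Classical.decRel _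
  μ ∈ spectrum ℝ (Γ.adjMatrix ℝ)

open Module.End in
lemma mem_spectrum_iff_matrix {n : Type*} [Fintype n] [DecidableEq n] (M : Matrix n n ℝ) (μ : ℝ) :
    μ ∈ spectrum ℝ M ↔ ∃ v : n → ℝ, v ≠ 0 ∧ M.mulVec v = μ • v := by
  rw [← AlgEquiv.spectrum_eq (Matrix.toLinAlgEquiv' (R := ℝ) (n := n)),
    ← hasEigenvalue_iff_mem_spectrum]
  have key : ∀ v : n → ℝ, Matrix.toLinAlgEquiv' M v = M.mulVec v := fun v => rfl
  constructor
  · intro h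
    obtain ⟨v, hv⟩ := h.exists_hasEigenvector
    refine ⟨v, hv.2, ?_⟩
    rw [← key]; exact hv.apply_eq_smul
  · rintro ⟨v, hv0, hv⟩
    refine hasEigenvalue_of_hasEigenvector ⟨mem_eigenspace_iff.mpr ?_, hv0⟩
    rw [key]; exact hv


theorem subgroup_inherits (G : Type*) [Group G] [Finite G] (k : ℕ)
    (hG : ∀ S : Finset G, (1 : G) ∉ S → (∀ s ∈ S, s⁻¹ ∈ S) → S.card ≤ k →
      IsIntegralGraph (cayley (S : Set G)))
    (H : Subgroup G) :
    ∀ T : Finset H, (1 : H) ∉ T → (∀ t ∈ T, t⁻¹ ∈ T) → T.card ≤ k →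
      IsIntegralGraph (cayley (T : Set H)) := by
  intro T hT1 hTinv hTk
  letI : Fintype G := Fintype.ofFinite G
  letI : DecidableEq G := Classical.decEq G
  letI : Fintype ↥H := Fintype.ofFinite ↥H
  letI : DecidableEq ↥H := Classical.decEq ↥H
  letI : DecidablePred (· ∈ H) := Classical.decPred _
  set ι : H ↪ G := ⟨(↑), Subtype.coe_injective⟩ with hι
  set T' : Finset G := T.map ι with hT'
  have h1' : (1 : G) ∉ T' := by
    intro h
    obtain ⟨t, ht, hth⟩ := Finset.mem_map.mp h
    have : t = 1 := Subtype.coe_injective (by simpa [hι] using hth)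
    exact hT1 (this ▸ ht)
  have hinv' : ∀ s ∈ T', s⁻¹ ∈ T' := by
    intro s hs
    obtain ⟨t, ht, rfl⟩ := Finset.mem_map.mp hs
    have : (ι t)⁻¹ = ι t⁻¹ := rfl
    rw [this]
    exact Finset.mem_map_of_mem ι (hTinv t ht)
  have hcard' : T'.card ≤ k := by rwa [hT', Finset.card_map]
  have hmemH : ∀ x ∈ T', x ∈ H := by
    intro x hx
    obtain ⟨t, ht, rfl⟩ := Finset.mem_map.mp hx
    exact t.2
  have hInt := hG T' h1' hinv' hcard'
  letI : DecidableRel (cayley ((T' : Finset G) : Set G)).Adj := Classical.decRel _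
  letI : DecidableRel (cayley ((T : Finset H) : Set H)).Adj := Classical.decRel _
  unfold IsIntegralGraph at hInt ⊢
  intro μ hμ
  apply hInt μ
  rw [mem_spectrum_iff_matrix] at hμ ⊢
  obtain ⟨v, hv0, hv⟩ := hμ
  set w : G → ℝ := fun g => if h : g ∈ H then v ⟨g, h⟩ else 0 with hw
  have hwcoe : ∀ b : H, w ↑b = v b := by
    intro b; simp [hw]
  have hwzero : ∀ g, g ∉ H → w g = 0 := by
    intro g hg; simp [hw, hg]
  have hadj_iff : ∀ a b : H, (cayley (T' : Set G)).Adj ↑a ↑b ↔ (cayley (T : Set H)).Adj a b := by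
    intro a b
    simp only [cayley, SimpleGraph.fromRel_adj, Finset.mem_coe]
    have e1 : ((↑b * (↑a)⁻¹ : G) ∈ T') ↔ b * a⁻¹ ∈ T := by
      have : (↑b * (↑a)⁻¹ : G) = ι (b * a⁻¹) := rfl
      rw [this, Finset.mem_map' ι]
    have e2 : ((↑a * (↑b)⁻¹ : G) ∈ T') ↔ a * b⁻¹ ∈ T := by
      have : (↑a * (↑b)⁻¹ : G) = ι (a * b⁻¹) := rfl
      rw [this, Finset.mem_map' ι]
    rw [e1, e2, Subtype.coe_injective.ne_iff]
  have hsum : ∀ f : G → ℝ, (∀ g, g ∉ H → f g = 0) → ∑ g : G, f g = ∑ b : H, f ↑b := by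
    intro f hf
    rw [← Finset.sum_image (s := Finset.univ) (g := ((↑) : H → G)) (f := f)
      (fun x _ y _ h => Subtype.coe_injective h)]
    refine (Finset.sum_subset (Finset.subset_univ _) ?_).symm
    intro x _ hx
    refine hf x fun hxH => hx ?_
    exact Finset.mem_image.mpr ⟨⟨x, hxH⟩, Finset.mem_univ _, rfl⟩
  refine ⟨w, ?_, ?_⟩
  · obtain ⟨a, ha⟩ := Function.ne_iff.mp hv0
    intro h
    apply ha
    rw [← hwcoe a, h]; rfl
  · funext g
    rw [Matrix.mulVec, dotProduct]
    by_cases hg : g ∈ H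
    · set a : H := ⟨g, hg⟩ with hadef
      have hga : g = ↑a := rfl
      rw [hsum _ (fun h hh => by rw [hwzero h hh, mul_zero])]
      have step : ∀ b : H, (cayley (T' : Set G)).adjMatrix ℝ g ↑b * w ↑b
          = (cayley (T : Set H)).adjMatrix ℝ a b * v b := by
        intro b
        rw [hwcoe, SimpleGraph.adjMatrix_apply, SimpleGraph.adjMatrix_apply, hga]
        by_cases hab : (cayley (T : Set H)).Adj a b
        · rw [if_pos ((hadj_iff a b).mpr hab), if_pos hab]
        · rw [if_neg (fun hc => hab ((hadj_iff a b).mp hc)), if_neg hab]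
      rw [Finset.sum_congr rfl (fun b _ => step b)]
      have := congrFun hv a
      rw [Matrix.mulVec, dotProduct] at this
      rw [this, Pi.smul_apply, Pi.smul_apply, hga, hwcoe]
    · have hz : ∀ h : G, (cayley (T' : Set G)).adjMatrix ℝ g h * w h = 0 := by
        intro h
        by_cases hh : h ∈ H
        · rw [SimpleGraph.adjMatrix_apply, if_neg, zero_mul]
          intro hadj
          rcases hadj with ⟨hne, hc | hc⟩
          · have h1 : h * g⁻¹ ∈ H := hmemH _ (Finset.mem_coe.mp hc)
            have : g⁻¹ ∈ H := by
              have := H.mul_mem (H.inv_mem hh) h1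
              rwa [inv_mul_cancel_left] at this
            exact hg (by simpa using H.inv_mem this)
          · have h1 : g * h⁻¹ ∈ H := hmemH _ (Finset.mem_coe.mp hc)
            have : g ∈ H := by
              have := H.mul_mem h1 hh
              rwa [inv_mul_cancel_right] at this
            exact hg this
        · rw [hwzero h hh, mul_zero]
      rw [Finset.sum_congr rfl (fun h _ => hz h), Finset.sum_const_zero,
        Pi.smul_apply, hwzero g hg, smul_zero]
end

section
/- If G is a finite group such that every Cayley graph Cay(G,S) with |S| ≤ k is integral, N is a normal subgroup of G with |N| dividing k, then every Cayley graph over G/N with connection set of size at most k/|N| is integral. -/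
open Finset Matrix Module.End Polynomial in
theorem quotient_by_small_normal (G : Type*) [Group G] [Finite G] (k : ℕ)
    (hG : ∀ S : Finset G, (1 : G) ∉ S → (∀ s ∈ S, s⁻¹ ∈ S) → S.card ≤ k →
      IsIntegralGraph (cayley (S : Set G)))
    (N : Subgroup G) [N.Normal] (hdvd : Nat.card N ∣ k) :
    ∀ S : Finset (G ⧸ N), (1 : G ⧸ N) ∉ S → (∀ s ∈ S, s⁻¹ ∈ S) →
      S.card ≤ k / Nat.card N →
      IsIntegralGraph (cayley (S : Set (G ⧸ N))) := by
  intro S hS1 hSsym hScard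
  unfold IsIntegralGraph
  intro μ hμ
  letI : Fintype (G ⧸ N) := Fintype.ofFinite _
  letI : DecidableEq (G ⧸ N) := Classical.decEq _
  letI : Fintype G := Fintype.ofFinite G
  letI : DecidableEq G := Classical.decEq G
  letI : DecidableRel (cayley (S : Set (G ⧸ N))).Adj := Classical.decRel _
  set n := Nat.card N with hn
  have hnpos : 0 < n := Nat.card_pos
  -- the pullback connection set
  set T : Finset G := Finset.univ.filter (fun g : G => ((g : G ⧸ N) ∈ S)) with hT
  letI : DecidableRel (cayley (T : Set G)).Adj := Classical.decRel _
  have hmemT : ∀ g : G, g ∈ T ↔ ((g : G ⧸ N) ∈ S) := by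
    intro g; simp [hT]
  have hT1 : (1 : G) ∉ T := by
    rw [hmemT]; simpa using hS1
  have hTsym : ∀ s ∈ T, s⁻¹ ∈ T := by
    intro s hs
    rw [hmemT] at hs ⊢
    simpa using hSsym _ hs
  -- fibers of the quotient map have size n
  have fiber : ∀ c : G ⧸ N,
      (Finset.univ.filter (fun g : G => ((g : G ⧸ N) = c))).card = n := by
    intro c
    obtain ⟨g₀, rfl⟩ := QuotientGroup.mk_surjective c
    rw [← Fintype.card_subtype, ← Nat.card_eq_fintype_card, hn]
    refine Nat.card_congr ?_
    refine ⟨fun g => ⟨g₀⁻¹ * g.1, ?_⟩, fun x => ⟨g₀ * x.1, ?_⟩, ?_, ?_⟩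
    · exact QuotientGroup.eq.mp g.2.symm
    · exact (QuotientGroup.eq.mpr (by simpa using x.2)).symm
    · rintro ⟨g, hg⟩; simp
    · rintro ⟨x, hx⟩; simp
  have hTcard : T.card ≤ k := by
    have h1 : T.card = ∑ c ∈ S, (T.filter (fun g : G => ((g : G ⧸ N) = c))).card :=
      Finset.card_eq_sum_card_fiberwise (fun x hx => (hmemT x).mp hx)
    have h2 : ∀ c ∈ S, (T.filter (fun g : G => ((g : G ⧸ N) = c))).card = n := by
      intro c hc
      rw [← fiber c]
      congr 1
      ext g
      simp only [Finset.mem_filter, hmemT, Finset.mem_univ, true_and]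
      constructor
      · rintro ⟨-, h⟩; exact h
      · rintro h; exact ⟨h ▸ hc, h⟩
    rw [h1, Finset.sum_congr rfl h2, Finset.sum_const, smul_eq_mul]
    calc S.card * n ≤ (k / n) * n := Nat.mul_le_mul_right n hScard
    _ ≤ k := Nat.div_mul_le_self k n
  -- adjacency correspondence
  have hadj : ∀ g h : G,
      (cayley (T : Set G)).Adj g h ↔ (cayley (S : Set (G ⧸ N))).Adj g h := by
    intro g h
    simp only [cayley, SimpleGraph.fromRel_adj, Finset.mem_coe, hmemT,
      QuotientGroup.mk_mul, QuotientGroup.mk_inv]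
    constructor
    · rintro ⟨hne, hor⟩
      refine ⟨fun heq => ?_, hor⟩
      rcases hor with h1 | h1
      · rw [heq, mul_inv_cancel] at h1; exact hS1 h1
      · rw [heq, mul_inv_cancel] at h1; exact hS1 h1
    · rintro ⟨hne, hor⟩
      exact ⟨fun heq => hne (by rw [heq]), hor⟩
  -- eigenvector for the quotient graph
  have hμ' := hμ
  rw [← AlgEquiv.spectrum_eq (Matrix.toLinAlgEquiv' :
        Matrix (G ⧸ N) (G ⧸ N) ℝ ≃ₐ[ℝ] _),
      ← Module.End.hasEigenvalue_iff_mem_spectrum] at hμ'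
  obtain ⟨v, hv⟩ := hμ'.exists_hasEigenvector
  have hvEq : ((cayley (S : Set (G ⧸ N))).adjMatrix ℝ) *ᵥ v = μ • v := by
    have := hv.apply_eq_smul
    rwa [Matrix.toLinAlgEquiv'_apply] at this
  -- lifted eigenvector
  set w : G → ℝ := fun g => v (g : G ⧸ N) with hw
  have hw0 : w ≠ 0 := by
    intro h0
    apply hv.2
    funext c
    obtain ⟨g, rfl⟩ := QuotientGroup.mk_surjective c
    exact congrFun h0 g
  have key : ((cayley (T : Set G)).adjMatrix ℝ) *ᵥ w = ((n : ℝ) * μ) • w := by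
    funext g
    have lhs : (((cayley (T : Set G)).adjMatrix ℝ) *ᵥ w) g
        = ∑ h : G, (fun c : G ⧸ N =>
            (if (cayley (S : Set (G ⧸ N))).Adj (g : G ⧸ N) c then (1:ℝ) else 0) * v c)
          (h : G ⧸ N) := by
      simp only [Matrix.mulVec, dotProduct, SimpleGraph.adjMatrix_apply]
      refine Finset.sum_congr rfl fun h _ => ?_
      simp [hadj, hw]
    rw [lhs, Finset.sum_comp (fun c : G ⧸ N =>
            (if (cayley (S : Set (G ⧸ N))).Adj (g : G ⧸ N) c then (1:ℝ) else 0) * v c)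
          (fun h : G => (h : G ⧸ N)),
        Finset.image_univ_of_surjective QuotientGroup.mk_surjective]
    have : ∀ c : G ⧸ N,
        (Finset.univ.filter (fun h : G => ((h : G ⧸ N) = c))).card •
          ((if (cayley (S : Set (G ⧸ N))).Adj (g : G ⧸ N) c then (1:ℝ) else 0) * v c)
        = (n : ℝ) * ((if (cayley (S : Set (G ⧸ N))).Adj (g : G ⧸ N) c then (1:ℝ) else 0) * v c) := by
      intro c
      rw [fiber c, nsmul_eq_mul]
    rw [Finset.sum_congr rfl fun c _ => this c, ← Finset.mul_sum]
    have : ∑ c : G ⧸ N,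
        (if (cayley (S : Set (G ⧸ N))).Adj (g : G ⧸ N) c then (1:ℝ) else 0) * v c
        = (((cayley (S : Set (G ⧸ N))).adjMatrix ℝ) *ᵥ v) (g : G ⧸ N) := by
      simp only [Matrix.mulVec, dotProduct, SimpleGraph.adjMatrix_apply]
    rw [this, hvEq]
    simp [hw, mul_assoc]
  have hBspec : ((n : ℝ) * μ) ∈ spectrum ℝ ((cayley (T : Set G)).adjMatrix ℝ) := by
    rw [← AlgEquiv.spectrum_eq (Matrix.toLinAlgEquiv' : Matrix G G ℝ ≃ₐ[ℝ] _),
        ← Module.End.hasEigenvalue_iff_mem_spectrum]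
    refine Module.End.hasEigenvalue_of_hasEigenvector
      ⟨Module.End.mem_eigenspace_iff.mpr ?_, hw0⟩
    rw [Matrix.toLinAlgEquiv'_apply]
    exact key
  obtain ⟨z, hz⟩ := hG T hT1 hTsym hTcard ((n : ℝ) * μ) hBspec
  -- μ is an algebraic integer
  have hint : IsIntegral ℤ μ := by
    refine ⟨Matrix.charpoly ((cayley (S : Set (G ⧸ N))).adjMatrix ℤ),
      Matrix.charpoly_monic _, ?_⟩
    have hmap : ((cayley (S : Set (G ⧸ N))).adjMatrix ℤ).map (Int.castRingHom ℝ)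
        = (cayley (S : Set (G ⧸ N))).adjMatrix ℝ := by
      ext i j
      simp [SimpleGraph.adjMatrix_apply, Matrix.map_apply, apply_ite]
    have hroot : ((cayley (S : Set (G ⧸ N))).adjMatrix ℝ).charpoly.IsRoot μ := by
      have hEig := hμ'
      rw [Module.End.hasEigenvalue_iff_isRoot] at hEig
      refine hEig.dvd (minpoly.dvd ℝ _ ?_)
      have hcomm : (Polynomial.aeval
            (Matrix.toLinAlgEquiv' ((cayley (S : Set (G ⧸ N))).adjMatrix ℝ)))
            ((cayley (S : Set (G ⧸ N))).adjMatrix ℝ).charpoly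
          = Matrix.toLinAlgEquiv' ((Polynomial.aeval ((cayley (S : Set (G ⧸ N))).adjMatrix ℝ))
            ((cayley (S : Set (G ⧸ N))).adjMatrix ℝ).charpoly) :=
        Polynomial.aeval_algHom_apply
          (Matrix.toLinAlgEquiv'.toAlgHom : Matrix (G ⧸ N) (G ⧸ N) ℝ →ₐ[ℝ] _) _ _
      rw [hcomm, Matrix.aeval_self_charpoly]
      exact map_zero _
    rw [← Polynomial.eval_map]
    have : (Matrix.charpoly ((cayley (S : Set (G ⧸ N))).adjMatrix ℤ)).map
        (algebraMap ℤ ℝ) = ((cayley (S : Set (G ⧸ N))).adjMatrix ℝ).charpoly := by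
      rw [← hmap, ← Matrix.charpoly_map]
      rfl
    rw [this]
    exact hroot
  -- conclude μ is an integer via the rational q = z / n
  set q : ℚ := (z : ℚ) / (n : ℚ) with hq
  have hqμ : (q : ℝ) = μ := by
    have hn0 : (n : ℝ) ≠ 0 := by positivity
    push_cast [hq]
    field_simp
    linarith [hz]
  have hqint : IsIntegral ℤ q := by
    have : IsIntegral ℤ ((algebraMap ℚ ℝ) q) := by
      simpa [hqμ] using hint
    exact (isIntegral_algebraMap_iff (algebraMap ℚ ℝ).injective).mp this
  obtain ⟨m, hm⟩ := IsIntegrallyClosed.isIntegral_iff.mp hqint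
  refine ⟨m, ?_⟩
  rw [← hqμ, ← hm]
  push_cast
  rfl
end

section
/- Every Cayley graph over the generalized dicyclic group Dic(E_{3ⁿ} × ℤ₆) with connection set of size at most 5 is integral. -/
open Polynomial Finset Pointwise

section AnnSet
variable {R : Type*} [Ring R] [Algebra ℝ R]

/-- `a` is annihilated by the split polynomial with integer roots `T`. -/
def AnnSet (a : R) (T : Finset ℤ) : Prop :=
  Polynomial.aeval a (∏ t ∈ T, (X - C (t : ℝ))) = 0

lemma commute_aeval {a b : R} (h : Commute a b) (p q : ℝ[X]) :
    Commute (aeval a p) (aeval b q) := by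
  have h1 : ∀ (r : ℝ[X]) (c : R), Commute c a → Commute c (aeval a r) := by
    intro r
    induction r using Polynomial.induction_on' with
    | add f g hf hg =>
      intro c hc
      rw [map_add]
      exact (hf c hc).add_right (hg c hc)
    | monomial n t =>
      intro c hc
      rw [aeval_monomial]
      exact ((Algebra.commute_algebraMap_left _ _).symm).mul_right (hc.pow_right n)
  have h2 : Commute (aeval a p) b := ((h1 p b h.symm)).symm
  induction q using Polynomial.induction_on' with
  | add f g hf hg => rw [map_add]; exact hf.add_right hg
  | monomial n t =>
    rw [aeval_monomial]
    exact ((Algebra.commute_algebraMap_left _ _).symm).mul_right (h2.pow_right n)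

lemma basis_mul_nodal {s : Finset ℤ} {i : ℤ} (hi : i ∈ s) :
    Lagrange.basis s (fun t : ℤ => (t : ℝ)) i * (X - C (i : ℝ)) =
      C (∏ j ∈ s.erase i, ((i : ℝ) - (j : ℝ))⁻¹) * ∏ t ∈ s, (X - C (t : ℝ)) := by
  unfold Lagrange.basis Lagrange.basisDivisor
  rw [prod_mul_distrib, ← map_prod]
  rw [mul_assoc, ← Finset.mul_prod_erase s _ hi]
  ring

lemma annSet_add {a b : R} (hab : Commute a b) {T U : Finset ℤ}
    (hT : T.Nonempty) (hU : U.Nonempty) (ha : AnnSet a T) (hb : AnnSet b U) :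
    AnnSet (a + b) (T + U) := by
  classical
  unfold AnnSet at *
  have hinj : ∀ s : Finset ℤ, Set.InjOn (fun t : ℤ => (t : ℝ)) s := by
    intro s p _ q _ hpq
    exact Int.cast_injective hpq
  have hT1 : (∑ t ∈ T, Lagrange.basis T (fun t : ℤ => (t : ℝ)) t) = 1 :=
    Lagrange.sum_basis (hinj T) hT
  have hU1 : (∑ u ∈ U, Lagrange.basis U (fun t : ℤ => (t : ℝ)) u) = 1 :=
    Lagrange.sum_basis (hinj U) hU
  have hkillT : ∀ t ∈ T,
      aeval a (Lagrange.basis T (fun t : ℤ => (t : ℝ)) t) * (a - algebraMap ℝ R (t : ℝ)) = 0 := by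
    intro t ht
    have h0 : aeval a (Lagrange.basis T (fun t : ℤ => (t : ℝ)) t * (X - C (t : ℝ))) = 0 := by
      rw [basis_mul_nodal ht, map_mul, ha, mul_zero]
    rw [map_mul] at h0
    simpa using h0
  have hkillU : ∀ u ∈ U,
      aeval b (Lagrange.basis U (fun t : ℤ => (t : ℝ)) u) * (b - algebraMap ℝ R (u : ℝ)) = 0 := by
    intro u hu
    have h0 : aeval b (Lagrange.basis U (fun t : ℤ => (t : ℝ)) u * (X - C (u : ℝ))) = 0 := by
      rw [basis_mul_nodal hu, map_mul, hb, mul_zero]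
    rw [map_mul] at h0
    simpa using h0
  set r : ℝ[X] := ∏ v ∈ T + U, (X - C (v : ℝ)) with hr
  have goal : ∀ t ∈ T, ∀ u ∈ U,
      aeval a (Lagrange.basis T (fun t : ℤ => (t : ℝ)) t) *
      (aeval b (Lagrange.basis U (fun t : ℤ => (t : ℝ)) u) * aeval (a + b) r) = 0 := by
    intro t ht u hu
    have hmem : t + u ∈ T + U := Finset.add_mem_add ht hu
    set πt := aeval a (Lagrange.basis T (fun t : ℤ => (t : ℝ)) t) with hπt
    set ρu := aeval b (Lagrange.basis U (fun t : ℤ => (t : ℝ)) u) with hρu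
    set Rrest := aeval (a + b) (∏ v ∈ (T + U).erase (t + u), (X - C (v : ℝ))) with hR
    set A' := a - algebraMap ℝ R (t : ℝ) with hA'
    set B' := b - algebraMap ℝ R (u : ℝ) with hB'
    have hsplit : aeval (a + b) r = (A' + B') * Rrest := by
      rw [hr, ← Finset.mul_prod_erase _ _ hmem, map_mul]
      congr 1
      rw [map_sub, aeval_X, aeval_C]
      rw [show (((t + u : ℤ)) : ℝ) = (t : ℝ) + (u : ℝ) by push_cast; ring, map_add]
      rw [hA', hB']
      abel
    have c1 : Commute ρu A' := by
      have hA2 : A' = aeval a (X - C (t : ℝ)) := by rw [map_sub, aeval_X, aeval_C]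
      rw [hA2, hρu]
      exact commute_aeval hab.symm _ _
    have e1 : πt * A' = 0 := hkillT t ht
    have e2 : ρu * B' = 0 := hkillU u hu
    have key1 : πt * (ρu * (A' * Rrest)) = (πt * A') * (ρu * Rrest) := by
      rw [← mul_assoc ρu A' Rrest, c1.eq, mul_assoc A' ρu Rrest, ← mul_assoc πt A' _]
    have key2 : πt * (ρu * (B' * Rrest)) = πt * ((ρu * B') * Rrest) := by
      rw [← mul_assoc ρu B' Rrest]
    rw [hsplit, add_mul, mul_add, mul_add, key1, key2, e1, e2]
    simp
  calc aeval (a + b) r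
      = (∑ t ∈ T, aeval a (Lagrange.basis T (fun t : ℤ => (t : ℝ)) t)) *
        ((∑ u ∈ U, aeval b (Lagrange.basis U (fun t : ℤ => (t : ℝ)) u)) * aeval (a + b) r) := by
        rw [← map_sum, hT1, ← map_sum, hU1]
        simp
    _ = ∑ t ∈ T, aeval a (Lagrange.basis T (fun t : ℤ => (t : ℝ)) t) *
        ((∑ u ∈ U, aeval b (Lagrange.basis U (fun t : ℤ => (t : ℝ)) u)) * aeval (a + b) r) := by
        rw [Finset.sum_mul]
    _ = 0 := by
        refine Finset.sum_eq_zero fun t ht => ?_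
        rw [Finset.sum_mul, Finset.mul_sum]
        exact Finset.sum_eq_zero fun u hu => goal t ht u hu

lemma annset_zero : AnnSet (0 : R) {0} := by
  unfold AnnSet
  simp

lemma annset_selfinv {y : R} (h : y * y = 1) : AnnSet y {-1, 1} := by
  unfold AnnSet
  rw [Finset.prod_insert (by decide), Finset.prod_singleton]
  simp only [map_mul, map_sub, aeval_X, aeval_C, map_intCast]
  push_cast
  have key : (y - -1) * (y - 1) = y * y - 1 := by noncomm_ring
  rw [key, h, sub_self]

lemma annset_pair {e : R} (h : e * e = e + 2) : AnnSet e {-1, 2} := by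
  unfold AnnSet
  rw [Finset.prod_insert (by decide), Finset.prod_singleton]
  simp only [map_mul, map_sub, aeval_X, aeval_C, map_intCast]
  push_cast
  have key : (e - -1) * (e - 2) = e * e - e - 2 := by
    noncomm_ring
    simp [smul_eq_mul]
  rw [key, h]
  abel

lemma annset_quad {g : R} (h : (g*g)*(g*g) = 5*(g*g) - 4) : AnnSet g {-2,-1,1,2} := by
  unfold AnnSet
  rw [Finset.prod_insert (by decide), Finset.prod_insert (by decide),
    Finset.prod_insert (by decide), Finset.prod_singleton]
  simp only [map_mul, map_sub, aeval_X, aeval_C, map_intCast]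
  push_cast
  have key : (g - -2) * ((g - -1) * ((g - 1) * (g - 2))) = (g*g)*(g*g) - 5*(g*g) + 4 := by
    noncomm_ring
    norm_num
  rw [key, h]
  abel

lemma annset_w1 {w : R} (h : w*w*w = 4*w) : AnnSet w {-2,0,2} := by
  unfold AnnSet
  rw [Finset.prod_insert (by decide), Finset.prod_insert (by decide), Finset.prod_singleton]
  simp only [map_mul, map_sub, aeval_X, aeval_C, map_intCast]
  push_cast
  have key : (w - -2) * ((w - 0) * (w - 2)) = w*w*w - 4*w := by
    noncomm_ring
    try simp [smul_eq_mul]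
    try norm_num
  rw [key, h]
  abel

lemma annset_w2 {w : R} (h : w*w*w*w*w = 20*(w*w*w) - 64*w) : AnnSet w {-4,-2,0,2,4} := by
  unfold AnnSet
  rw [Finset.prod_insert (by decide), Finset.prod_insert (by decide),
    Finset.prod_insert (by decide), Finset.prod_insert (by decide), Finset.prod_singleton]
  simp only [map_mul, map_sub, aeval_X, aeval_C, map_intCast]
  push_cast
  have key : (w - -4) * ((w - -2) * ((w - 0) * ((w - 2) * (w - 4)))) =
      w*w*w*w*w - 20*(w*w*w) + 64*w := by
    noncomm_ring
    try simp [smul_eq_mul]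
    try norm_num
  rw [key, h]
  abel

end AnnSet

section Glue
variable {G : Type*} [Group G] [Fintype G] [DecidableEq G]

/-- Left multiplication permutation matrices, as a monoid hom to matrices. -/
def permMap (G : Type*) [Group G] [Fintype G] [DecidableEq G] : G →* Matrix G G ℝ where
  toFun g := Matrix.of (fun a b => if a = g * b then 1 else 0)
  map_one' := by
    ext a b
    simp [Matrix.one_apply]
  map_mul' g h := by
    ext a c
    rw [Matrix.mul_apply]
    simp only [Matrix.of_apply]
    rw [Finset.sum_eq_single (h * c)]
    · simp [mul_assoc]
    · intro b _ hb
      rw [if_neg hb, mul_zero]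
    · simp

/-- The algebra morphism from the group algebra to matrices. -/
noncomputable def Phi (G : Type*) [Group G] [Fintype G] [DecidableEq G] :
    MonoidAlgebra ℝ G →ₐ[ℝ] Matrix G G ℝ :=
  (MonoidAlgebra.lift ℝ (Matrix G G ℝ) G) (permMap G)

lemma Phi_of (g : G) : Phi G (MonoidAlgebra.of ℝ G g) = permMap G g := by
  unfold Phi
  simp

lemma spectrum_int_of_annset (M : Matrix G G ℝ) (α : MonoidAlgebra ℝ G)
    (hM : M = Phi G α) {V : Finset ℤ} (hann : AnnSet α V) :
    ∀ μ ∈ spectrum ℝ M, ∃ z : ℤ, (z : ℝ) = μ := by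
  intro μ hμ
  set p : ℝ[X] := ∏ t ∈ V, (X - C (t : ℝ)) with hp
  have h1 : Polynomial.aeval M p = 0 := by
    rw [hM, Polynomial.aeval_algHom_apply, hann, map_zero]
  have h2 : p.eval μ ∈ spectrum ℝ (Polynomial.aeval M p) :=
    spectrum.subset_polynomial_aeval M p ⟨μ, hμ, rfl⟩
  rw [h1] at h2
  haveI : Nonempty G := ⟨1⟩
  rw [spectrum.zero_eq] at h2
  have h3 : p.eval μ = 0 := h2
  rw [hp, Polynomial.eval_prod] at h3
  obtain ⟨t, htV, ht⟩ := Finset.prod_eq_zero_iff.mp h3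
  refine ⟨t, ?_⟩
  simp only [Polynomial.eval_sub, Polynomial.eval_X, Polynomial.eval_C] at ht
  linarith [sub_eq_zero.mp ht]

lemma adjMatrix_eq_Phi (S : Finset G) (h1 : (1:G) ∉ S) (hsym : ∀ s ∈ S, s⁻¹ ∈ S)
    (Γ : SimpleGraph G) [DecidableRel Γ.Adj]
    (hΓ : Γ = SimpleGraph.fromRel (fun g h => h * g⁻¹ ∈ (S : Set G))) :
    Γ.adjMatrix ℝ = Phi G (∑ s ∈ S, MonoidAlgebra.of ℝ G s) := by
  have hAdj : ∀ a b : G, Γ.Adj a b ↔ a * b⁻¹ ∈ S := by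
    intro a b
    subst hΓ
    rw [SimpleGraph.fromRel_adj]
    constructor
    · rintro ⟨hne, h | h⟩
      · have h2 := hsym _ h
        rwa [mul_inv_rev, inv_inv] at h2
      · exact h
    · intro h
      refine ⟨?_, Or.inr h⟩
      rintro rfl
      rw [mul_inv_cancel] at h
      exact h1 h
  ext a b
  rw [map_sum, Matrix.sum_apply]
  have hterm : ∀ s : G, (Phi G (MonoidAlgebra.of ℝ G s)) a b
      = if s = a * b⁻¹ then (1:ℝ) else 0 := by
    intro s
    rw [Phi_of]
    show (if a = s * b then (1:ℝ) else 0) = _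
    congr 1
    exact propext ⟨fun h => by subst h; group, fun h => by subst h; group⟩
  rw [Finset.sum_congr rfl fun s _ => hterm s, Finset.sum_ite_eq' S (a * b⁻¹) fun _ => (1:ℝ)]
  rw [SimpleGraph.adjMatrix_apply]
  by_cases h : a * b⁻¹ ∈ S
  · rw [if_pos h, if_pos ((hAdj a b).mpr h)]
  · rw [if_neg h, if_neg (fun hadj => h ((hAdj a b).mp hadj))]

end Glue

section Blocks
variable {G : Type*} [Group G]

local notation "of'" => MonoidAlgebra.of ℝ G

lemma of_commute {g h : G} (hgh : g * h = h * g) : Commute (of' g) (of' h) := by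
  unfold Commute SemiconjBy
  rw [← map_mul, ← map_mul, hgh]

lemma of_commute_sum {g : G} {T : Finset G} (h : ∀ t ∈ T, g * t = t * g) :
    Commute (of' g) (∑ t ∈ T, of' t) :=
  Commute.sum_right _ _ _ fun t ht => of_commute (h t ht)

/-- Symmetric finset: sum is invariant under elementwise inversion. -/
lemma sum_inv_reindex {A : Type*} [AddCommMonoid A] (f : G → A) {T : Finset G}
    (hsym : ∀ t ∈ T, t⁻¹ ∈ T) :
    ∑ t ∈ T, f t⁻¹ = ∑ t ∈ T, f t := by
  classical
  refine Finset.sum_nbij' (fun t => t⁻¹) (fun t => t⁻¹) ?_ ?_ ?_ ?_ ?_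
  · intro a ha; exact hsym a ha
  · intro a ha; exact hsym a ha
  · intro a _; exact inv_inv a
  · intro a _; exact inv_inv a
  · intro a _; rfl

/-- An element conjugating every member of a symmetric set to its inverse
commutes with the corresponding sum. -/
lemma conj_commute_sum {s : G} {T : Finset G} (hsym : ∀ t ∈ T, t⁻¹ ∈ T)
    (h : ∀ t ∈ T, s * t = t⁻¹ * s) : Commute (∑ t ∈ T, of' t) (of' s) := by
  unfold Commute SemiconjBy
  rw [Finset.sum_mul, Finset.mul_sum]
  have h1 : ∀ t ∈ T, of' s * of' t = of' t⁻¹ * of' s := by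
    intro t ht
    rw [← map_mul, ← map_mul, h t ht]
  rw [Finset.sum_congr rfl h1]
  exact (sum_inv_reindex (fun y => of' y * of' s) hsym).symm

lemma sumP_ann (P : Subgroup G)
    (hPab : ∀ a b : G, a ∈ P → b ∈ P → a * b = b * a)
    (hcube : ∀ u : G, u ∈ P → u * u = u⁻¹) :
    ∀ (N : ℕ) (T : Finset G), T.card ≤ N → (∀ u ∈ T, u ∈ P) → (1:G) ∉ T →
      (∀ u ∈ T, u⁻¹ ∈ T) →
    ∃ V : Finset ℤ, V.Nonempty ∧ AnnSet (∑ u ∈ T, of' u) V := by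
  classical
  intro N
  induction N with
  | zero =>
    intro T hTcard _ _ _
    have : T = ∅ := Finset.card_eq_zero.mp (Nat.le_zero.mp hTcard)
    subst this
    exact ⟨{0}, ⟨0, by simp⟩, by rw [Finset.sum_empty]; exact annset_zero⟩
  | succ N ih =>
    intro T hTcard hTP hT1 hTsym
    rcases T.eq_empty_or_nonempty with rfl | ⟨u, hu⟩
    · exact ⟨{0}, ⟨0, by simp⟩, by rw [Finset.sum_empty]; exact annset_zero⟩
    have huP := hTP u hu
    have hui : u⁻¹ ∈ T := hTsym u hu
    have hune : u ≠ u⁻¹ := by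
      intro h
      have h2 : u * u = 1 := by nth_rewrite 2 [h]; exact mul_inv_cancel u
      have h3 := hcube u huP
      rw [h2] at h3
      have h4 : u = 1 := by rw [← inv_inv u, ← h3, inv_one]
      exact hT1 (h4 ▸ hu)
    set T' := (T.erase u).erase u⁻¹ with hT'
    have hT'sub : T' ⊆ T := (Finset.erase_subset _ _).trans (Finset.erase_subset _ _)
    have hT'card : T'.card ≤ N := by
      have h1 : (T.erase u).card = T.card - 1 := Finset.card_erase_of_mem hu
      have h2 : T'.card ≤ (T.erase u).card := Finset.card_erase_le
      omega
    have hT'sym : ∀ v ∈ T', v⁻¹ ∈ T' := by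
      intro v hv
      simp only [hT', Finset.mem_erase] at hv ⊢
      refine ⟨fun h => hv.2.1 (inv_injective h), fun h => hv.1 (by rw [← h, inv_inv]), hTsym v hv.2.2⟩
    have hsplit : ∑ v ∈ T, of' v = (of' u + of' u⁻¹) + ∑ v ∈ T', of' v := by
      rw [← Finset.add_sum_erase _ _ hu,
        ← Finset.add_sum_erase _ _ (Finset.mem_erase.mpr ⟨fun h => hune h.symm, hui⟩), add_assoc]
    obtain ⟨V, hVne, hVann⟩ := ih T' hT'card (fun v hv => hTP v (hT'sub hv))
      (fun h => hT1 (hT'sub h)) hT'sym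
    have he : (of' u + of' u⁻¹) * (of' u + of' u⁻¹) = (of' u + of' u⁻¹) + 2 := by
      rw [add_mul, mul_add, mul_add, ← map_mul, ← map_mul, ← map_mul, ← map_mul]
      rw [hcube u huP, mul_inv_cancel, inv_mul_cancel]
      have h4 : u⁻¹ * u⁻¹ = u := by rw [hcube u⁻¹ (inv_mem huP), inv_inv]
      rw [h4, map_one]
      have : (2 : MonoidAlgebra ℝ G) = 1 + 1 := by norm_num
      rw [this]
      abel
    have hcomm : Commute (of' u + of' u⁻¹) (∑ v ∈ T', of' v) := by
      refine Commute.add_left ?_ ?_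
      · exact of_commute_sum fun t ht => hPab u t huP (hTP t (hT'sub ht))
      · exact of_commute_sum fun t ht => hPab u⁻¹ t (inv_mem huP) (hTP t (hT'sub ht))
    refine ⟨{-1, 2} + V, ?_, ?_⟩
    · obtain ⟨v, hv⟩ := hVne
      exact ⟨-1 + v, Finset.add_mem_add (by simp) hv⟩
    · rw [hsplit]
      exact annSet_add hcomm (by simp) hVne (annset_pair he) hVann

lemma sum2_ann (P : Subgroup G) (x : G)
    (hPab : ∀ a b : G, a ∈ P → b ∈ P → a * b = b * a)
    (hcube : ∀ u : G, u ∈ P → u * u = u⁻¹)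
    (hcentP : ∀ u : G, u ∈ P → x^2 * u = u * x^2)
    (hx4 : x^2 * x^2 = 1) :
    ∀ (N : ℕ) (T : Finset G), T.card ≤ N → (∀ s ∈ T, ∃ p, p ∈ P ∧ s = p * x^2) →
      (∀ s ∈ T, s⁻¹ ∈ T) →
    ∃ V : Finset ℤ, V.Nonempty ∧ AnnSet (∑ s ∈ T, of' s) V := by
  classical
  -- basic product computation for elements of the coset P x²
  have hmul : ∀ p q : G, p ∈ P → q ∈ P → (p * x^2) * (q * x^2) = p * q := by
    intro p q hp hq
    calc (p * x^2) * (q * x^2) = p * (x^2 * q) * x^2 := by group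
      _ = p * (q * x^2) * x^2 := by rw [hcentP q hq]
      _ = p * q * (x^2 * x^2) := by group
      _ = p * q := by rw [hx4, mul_one]
  have hcommel : ∀ s t : G, (∃ p, p ∈ P ∧ s = p * x^2) → (∃ q, q ∈ P ∧ t = q * x^2) →
      s * t = t * s := by
    rintro s t ⟨p, hp, rfl⟩ ⟨q, hq, rfl⟩
    rw [hmul p q hp hq, hmul q p hq hp, hPab p q hp hq]
  have hinvform : ∀ p : G, p ∈ P → (p * x^2)⁻¹ = p⁻¹ * x^2 := by
    intro p hp
    refine inv_eq_of_mul_eq_one_right ?_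
    rw [hmul p p⁻¹ hp (inv_mem hp), mul_inv_cancel]
  intro N
  induction N with
  | zero =>
    intro T hTcard _ _
    have : T = ∅ := Finset.card_eq_zero.mp (Nat.le_zero.mp hTcard)
    subst this
    exact ⟨{0}, ⟨0, by simp⟩, by rw [Finset.sum_empty]; exact annset_zero⟩
  | succ N ih =>
    intro T hTcard hTform hTsym
    rcases T.eq_empty_or_nonempty with rfl | ⟨s, hs⟩
    · exact ⟨{0}, ⟨0, by simp⟩, by rw [Finset.sum_empty]; exact annset_zero⟩
    obtain ⟨p, hp, hsp⟩ := hTform s hs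
    by_cases hss : s = s⁻¹
    · -- single self-inverse element block
      set T' := T.erase s with hT'
      have hT'sub : T' ⊆ T := Finset.erase_subset _ _
      have hT'card : T'.card ≤ N := by
        have h1 : T'.card = T.card - 1 := by rw [hT']; exact Finset.card_erase_of_mem hs
        omega
      have hT'sym : ∀ v ∈ T', v⁻¹ ∈ T' := by
        intro v hv
        simp only [hT', Finset.mem_erase] at hv ⊢
        refine ⟨?_, hTsym v hv.2⟩
        intro h
        exact hv.1 (by rw [← inv_inv v, h, ← hss])
      obtain ⟨V, hVne, hVann⟩ := ih T' hT'card (fun v hv => hTform v (hT'sub hv)) hT'sym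
      have hself : of' s * of' s = 1 := by
        rw [← map_mul]
        nth_rewrite 2 [hss]
        rw [mul_inv_cancel, map_one]
      have hcomm : Commute (of' s) (∑ v ∈ T', of' v) :=
        of_commute_sum fun t ht => hcommel s t ⟨p, hp, hsp⟩ (hTform t (hT'sub ht))
      refine ⟨{-1, 1} + V, ?_, ?_⟩
      · obtain ⟨v, hv⟩ := hVne
        exact ⟨-1 + v, Finset.add_mem_add (by simp) hv⟩
      · rw [← Finset.add_sum_erase _ _ hs]
        exact annSet_add hcomm (by simp) hVne (annset_selfinv hself) hVann
    · -- pair block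
      have hsi : s⁻¹ ∈ T := hTsym s hs
      set T' := (T.erase s).erase s⁻¹ with hT'
      have hT'sub : T' ⊆ T := (Finset.erase_subset _ _).trans (Finset.erase_subset _ _)
      have hT'card : T'.card ≤ N := by
        have h1 : (T.erase s).card = T.card - 1 := Finset.card_erase_of_mem hs
        have h2 : T'.card ≤ (T.erase s).card := Finset.card_erase_le
        omega
      have hT'sym : ∀ v ∈ T', v⁻¹ ∈ T' := by
        intro v hv
        simp only [hT', Finset.mem_erase] at hv ⊢
        refine ⟨fun h => hv.2.1 (inv_injective h), fun h => hv.1 (by rw [← h, inv_inv]), hTsym v hv.2.2⟩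
      obtain ⟨V, hVne, hVann⟩ := ih T' hT'card (fun v hv => hTform v (hT'sub hv)) hT'sym
      have hsinvform : s⁻¹ = p⁻¹ * x^2 := by rw [hsp, hinvform p hp]
      -- products
      have hs2 : s * s = p * p := by rw [hsp, hmul p p hp hp]
      have hsi2 : s⁻¹ * s⁻¹ = p⁻¹ * p⁻¹ := by
        rw [hsinvform, hmul p⁻¹ p⁻¹ (inv_mem hp) (inv_mem hp)]
      set g := of' s + of' s⁻¹ with hg
      set f := of' (p*p) + of' ((p*p)⁻¹) with hf
      have hppinv : (p*p)⁻¹ = p⁻¹ * p⁻¹ := mul_inv_rev p p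
      have hgg : g * g = f + 2 := by
        rw [hg, hf, add_mul, mul_add, mul_add, ← map_mul, ← map_mul, ← map_mul, ← map_mul]
        rw [hs2, mul_inv_cancel, inv_mul_cancel, hsi2, map_one, hppinv]
        have : (2 : MonoidAlgebra ℝ G) = 1 + 1 := by norm_num
        rw [this]
        abel
      have hff : f * f = f + 2 := by
        rw [hf, add_mul, mul_add, mul_add, ← map_mul, ← map_mul, ← map_mul, ← map_mul]
        rw [hcube (p*p) (mul_mem hp hp), mul_inv_cancel, inv_mul_cancel,
          hcube (p*p)⁻¹ (inv_mem (mul_mem hp hp)), inv_inv, map_one]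
        have : (2 : MonoidAlgebra ℝ G) = 1 + 1 := by norm_num
        rw [this]
        abel
      have hquad : (g*g)*(g*g) = 5*(g*g) - 4 := by
        rw [hgg]
        have expand : (f + 2) * (f + 2) = f*f + 4*f + 4 := by
          noncomm_ring
          try simp [nsmul_eq_mul, smul_eq_mul]
          try norm_num
        rw [expand, hff]
        noncomm_ring
        try simp [nsmul_eq_mul, smul_eq_mul]
        try norm_num
      have hcomm : Commute g (∑ v ∈ T', of' v) := by
        refine Commute.add_left ?_ ?_
        · exact of_commute_sum fun t ht => hcommel s t ⟨p, hp, hsp⟩ (hTform t (hT'sub ht))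
        · exact of_commute_sum fun t ht =>
            hcommel s⁻¹ t ⟨p⁻¹, inv_mem hp, hsinvform⟩ (hTform t (hT'sub ht))
      refine ⟨{-2, -1, 1, 2} + V, ?_, ?_⟩
      · obtain ⟨v, hv⟩ := hVne
        exact ⟨-2 + v, Finset.add_mem_add (by simp) hv⟩
      · have hmem2 : s⁻¹ ∈ T.erase s := Finset.mem_erase.mpr ⟨fun h => hss h.symm, hsi⟩
        have hsplit : ∑ v ∈ T, of' v = g + ∑ v ∈ T', of' v := by
          rw [hg, ← Finset.add_sum_erase _ _ hs, ← Finset.add_sum_erase _ _ hmem2, add_assoc]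
        rw [hsplit]
        exact annSet_add hcomm (by simp) hVne (annset_quad hquad) hVann

end Blocks

section Odd
variable {G : Type*} [Group G]

local notation "of'" => MonoidAlgebra.of ℝ G

lemma onepair_rel (x : G)
    (hx4 : x^2 * x^2 = 1) (hcent : ∀ g : G, x^2 * g = g * x^2)
    (s₁ : G) (h₁ : s₁^2 = x^2) :
    let W := of' s₁ + of' s₁⁻¹
    W*W*W = 4*W := by
  intro W
  set y : MonoidAlgebra ℝ G := of' (x^2) with hy
  set η : MonoidAlgebra ℝ G := 1 + y with hη
  set m : MonoidAlgebra ℝ G := of' s₁ with hm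
  have hyy : y * y = 1 := by
    rw [hy, ← map_mul, hx4, map_one]
  have hinv1 : s₁⁻¹ = s₁ * x^2 := by
    refine inv_eq_of_mul_eq_one_right ?_
    rw [← mul_assoc, ← pow_two, h₁, hx4]
  have hW : W = m * η := by
    rw [hη, hm, mul_add, mul_one, hy, ← map_mul, ← hinv1]
  have hmy : m * y = y * m := by
    rw [hm, hy, ← map_mul, ← map_mul, hcent]
  have hmη : m * η = η * m := by
    have : Commute m η := by rw [hη]; exact (Commute.one_right m).add_right hmy
    exact this
  have hmm : m * m = y := by
    rw [hm, hy, ← map_mul, ← pow_two, h₁]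
  have hyη : y * η = η := by
    rw [hη, mul_add, mul_one, hyy, add_comm]
  have hηη : η * η = 2 * η := by
    rw [hη, add_mul, one_mul, hyη, two_mul]
  have hWW : W * W = 2 * η := by
    rw [hW]
    calc m * η * (m * η) = m * (η * m) * η := by noncomm_ring
      _ = m * (m * η) * η := by rw [hmη]
      _ = (m * m) * (η * η) := by noncomm_ring
      _ = y * (2 * η) := by rw [hmm, hηη]
      _ = 2 * (y * η) := by noncomm_ring
      _ = 2 * η := by rw [hyη]
  calc W * W * W = (2 * η) * (m * η) := by rw [hWW, hW]
    _ = 2 * ((η * m) * η) := by noncomm_ring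
    _ = 2 * ((m * η) * η) := by rw [hmη]
    _ = 2 * (m * (η * η)) := by noncomm_ring
    _ = 2 * (m * (2 * η)) := by rw [hηη]
    _ = 4 * (m * η) := by noncomm_ring
    _ = 4 * W := by rw [hW]

lemma twopair_rel (P : Subgroup G) (x : G)
    (hx4 : x^2 * x^2 = 1) (hcent : ∀ g : G, x^2 * g = g * x^2)
    (hoddP : ∀ s : G, s^2 = x^2 → ∀ v : G, v ∈ P → s * v = v⁻¹ * s)
    (hcube : ∀ u : G, u ∈ P → u * u = u⁻¹)
    (s₁ s₂ : G) (h₁ : s₁^2 = x^2) (h₂ : s₂^2 = x^2)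
    (v : G) (hvdef : v = s₁ * s₂⁻¹) (hv : v ∈ P) :
    let W := of' s₁ + of' s₁⁻¹ + (of' s₂ + of' s₂⁻¹)
    W*W*W*W*W = 20*(W*W*W) - 64*W := by
  intro W
  set y : MonoidAlgebra ℝ G := of' (x^2) with hy
  set η : MonoidAlgebra ℝ G := 1 + y with hη
  set m : MonoidAlgebra ℝ G := of' s₁ + of' s₂ with hm
  set e : MonoidAlgebra ℝ G := of' v + of' v⁻¹ with he
  set d : MonoidAlgebra ℝ G := 2 + e with hd
  have h2comm : ∀ z : MonoidAlgebra ℝ G, Commute 2 z := by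
    intro z
    have h2 : (2 : MonoidAlgebra ℝ G) = 1 + 1 := by norm_num
    rw [h2]
    exact (Commute.one_left z).add_left (Commute.one_left z)
  have hyy : y * y = 1 := by rw [hy, ← map_mul, hx4, map_one]
  have hinvgen : ∀ s : G, s^2 = x^2 → s⁻¹ = s * x^2 := by
    intro s h
    refine inv_eq_of_mul_eq_one_right ?_
    rw [← mul_assoc, ← pow_two, h, hx4]
  have hW : W = m * η := by
    rw [hη, hm, add_mul, mul_add, mul_add, mul_one, mul_one, hy,
      ← map_mul, ← map_mul, ← hinvgen s₁ h₁, ← hinvgen s₂ h₂]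
    try abel
  have hmy : m * y = y * m := by
    rw [hm, hy, add_mul, mul_add, ← map_mul, ← map_mul, ← map_mul, ← map_mul,
      hcent s₁, hcent s₂]
  have hmη : m * η = η * m := by
    have : Commute m η := by rw [hη]; exact (Commute.one_right m).add_right hmy
    exact this
  have hyη : y * η = η := by
    rw [hη, mul_add, mul_one, hyy, add_comm]
  have hηη : η * η = 2 * η := by
    rw [hη, add_mul, one_mul, hyη, two_mul]
  -- m * m = d * y
  have hs₁s₂ : s₁ * s₂ = v * x^2 := by
    have hgp : s₁ * s₂ = (s₁ * s₂⁻¹) * (s₂ * s₂) := by group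
    rw [hgp, ← pow_two, h₂, hvdef]
  have hs₂s₁ : s₂ * s₁ = v⁻¹ * x^2 := by
    have hvinv : v⁻¹ = s₂ * s₁⁻¹ := by rw [hvdef, mul_inv_rev, inv_inv]
    have hgp : s₂ * s₁ = (s₂ * s₁⁻¹) * (s₁ * s₁) := by group
    rw [hgp, ← pow_two, h₁, hvinv]
  have hmm : m * m = d * y := by
    rw [hm, add_mul, mul_add, mul_add, ← map_mul, ← map_mul, ← map_mul, ← map_mul,
      ← pow_two s₁, ← pow_two s₂, h₁, h₂, hs₁s₂, hs₂s₁, map_mul, map_mul,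
      hd, he, hy, add_mul, add_mul, two_mul]
    abel
  -- commutation of e (and d) with m, y, η
  have k1 : ∀ s : G, s^2 = x^2 → of' s * e = e * of' s := by
    intro s h
    rw [he, mul_add, add_mul, ← map_mul, ← map_mul, ← map_mul, ← map_mul,
      hoddP s h v hv, hoddP s h v⁻¹ (inv_mem hv), inv_inv]
    abel
  have hem : e * m = m * e := by
    rw [hm, mul_add, ← k1 s₁ h₁, ← k1 s₂ h₂, ← add_mul]
  have hey : e * y = y * e := by
    rw [he, hy, add_mul, mul_add, ← map_mul, ← map_mul, ← map_mul, ← map_mul,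
      hcent v, hcent v⁻¹]
  have hdm : d * m = m * d := by
    rw [hd]
    exact Commute.add_left (h2comm m) hem
  have hdy : d * y = y * d := by
    rw [hd]
    exact Commute.add_left (h2comm y) hey
  have hdη : d * η = η * d := by
    have : Commute d η := by rw [hη]; exact (Commute.one_right d).add_right hdy
    exact this
  have hee : e * e = e + 2 := by
    rw [he, add_mul, mul_add, mul_add, ← map_mul, ← map_mul, ← map_mul, ← map_mul]
    rw [hcube v hv, mul_inv_cancel, inv_mul_cancel]
    have h4 : v⁻¹ * v⁻¹ = v := by rw [hcube v⁻¹ (inv_mem hv), inv_inv]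
    rw [h4, map_one]
    have h2 : (2 : MonoidAlgebra ℝ G) = 1 + 1 := by norm_num
    rw [h2]
    abel
  have hdd : d * d = 5 * d - 4 := by
    rw [hd]
    have expand : (2 + e) * (2 + e) = e*e + 4*e + 4 := by
      noncomm_ring
      try simp [nsmul_eq_mul, smul_eq_mul]
      try norm_num
      try abel
    rw [expand, hee]
    noncomm_ring
    try simp [nsmul_eq_mul, smul_eq_mul]
    try norm_num
    try abel
  -- powers of W
  have hWW : W * W = 2 * (d * η) := by
    rw [hW]
    calc m * η * (m * η) = m * (η * m) * η := by noncomm_ring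
      _ = m * (m * η) * η := by rw [hmη]
      _ = (m * m) * (η * η) := by noncomm_ring
      _ = (d * y) * (2 * η) := by rw [hmm, hηη]
      _ = 2 * (d * (y * η)) := by noncomm_ring
      _ = 2 * (d * η) := by rw [hyη]
  have hηW : η * W = 2 * W := by
    rw [hW]
    calc η * (m * η) = (η * m) * η := by noncomm_ring
      _ = (m * η) * η := by rw [hmη]
      _ = m * (η * η) := by noncomm_ring
      _ = m * (2 * η) := by rw [hηη]
      _ = 2 * (m * η) := by noncomm_ring
  have hWη : W * η = η * W := by
    rw [hW]
    calc m * η * η = (η * m) * η := by rw [← hmη]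
      _ = η * (m * η) := by noncomm_ring
  have hdW : d * W = W * d := by
    rw [hW]
    calc d * (m * η) = (d * m) * η := by noncomm_ring
      _ = (m * d) * η := by rw [hdm]
      _ = m * (d * η) := by noncomm_ring
      _ = m * (η * d) := by rw [hdη]
      _ = (m * η) * d := by noncomm_ring
  have hW3 : W * W * W = 4 * (d * W) := by
    calc W * W * W = (2 * (d * η)) * W := by rw [hWW]
      _ = 2 * (d * (η * W)) := by noncomm_ring
      _ = 2 * (d * (2 * W)) := by rw [hηW]
      _ = 4 * (d * W) := by noncomm_ring
  have hW5 : W * W * W * W * W = 16 * (d * (d * W)) := by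
    calc W * W * W * W * W = (W * W * W) * (W * W) := by noncomm_ring
      _ = (4 * (d * W)) * (2 * (d * η)) := by rw [hW3, hWW]
      _ = 8 * (d * ((W * d) * η)) := by noncomm_ring
      _ = 8 * (d * ((d * W) * η)) := by rw [hdW]
      _ = 8 * (d * (d * (W * η))) := by noncomm_ring
      _ = 8 * (d * (d * (η * W))) := by rw [hWη]
      _ = 8 * (d * (d * (2 * W))) := by rw [hηW]
      _ = 16 * (d * (d * W)) := by noncomm_ring
  rw [hW5, hW3]
  calc 16 * (d * (d * W)) = 16 * ((d * d) * W) := by noncomm_ring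
    _ = 16 * ((5 * d - 4) * W) := by rw [hdd]
    _ = 20 * (4 * (d * W)) - 64 * W := by noncomm_ring


lemma odd_ann (P : Subgroup G) (x : G)
    (hx4 : x^2 * x^2 = 1) (hx2ne : x^2 ≠ 1)
    (hcent : ∀ g : G, x^2 * g = g * x^2)
    (hoddP : ∀ s : G, s^2 = x^2 → ∀ v : G, v ∈ P → s * v = v⁻¹ * s)
    (hcube : ∀ u : G, u ∈ P → u * u = u⁻¹)
    (hpair : ∀ s₁ s₂ : G, s₁^2 = x^2 → s₂^2 = x^2 → s₁ * s₂⁻¹ ∈ P ∨ s₁ * s₂ ∈ P)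
    (T : Finset G) (hTcard : T.card ≤ 5)
    (hTodd : ∀ s ∈ T, s^2 = x^2) (hTsym : ∀ s ∈ T, s⁻¹ ∈ T) :
    ∃ V : Finset ℤ, V.Nonempty ∧ AnnSet (∑ s ∈ T, of' s) V := by
  classical
  have hne : ∀ s ∈ T, s ≠ s⁻¹ := by
    intro s hs h
    apply hx2ne
    rw [← hTodd s hs, pow_two]
    nth_rewrite 2 [h]
    exact mul_inv_cancel s
  rcases T.eq_empty_or_nonempty with rfl | ⟨s₁, hs₁⟩
  · exact ⟨{0}, ⟨0, by simp⟩, by rw [Finset.sum_empty]; exact annset_zero⟩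
  have h₁ := hTodd s₁ hs₁
  have hs₁i : s₁⁻¹ ∈ T := hTsym s₁ hs₁
  have hne₁ : s₁ ≠ s₁⁻¹ := hne s₁ hs₁
  have hmem1 : s₁⁻¹ ∈ T.erase s₁ := Finset.mem_erase.mpr ⟨fun h => hne₁ h.symm, hs₁i⟩
  set T1 := (T.erase s₁).erase s₁⁻¹ with hT1def
  have hT1sub : T1 ⊆ T := (Finset.erase_subset _ _).trans (Finset.erase_subset _ _)
  have hT1sym : ∀ v ∈ T1, v⁻¹ ∈ T1 := by
    intro v hv
    simp only [hT1def, Finset.mem_erase] at hv ⊢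
    exact ⟨fun h => hv.2.1 (inv_injective h), fun h => hv.1 (by rw [← h, inv_inv]),
      hTsym v hv.2.2⟩
  have hsplit1 : ∑ s ∈ T, of' s = (of' s₁ + of' s₁⁻¹) + ∑ s ∈ T1, of' s := by
    rw [← Finset.add_sum_erase _ _ hs₁, ← Finset.add_sum_erase _ _ hmem1, add_assoc]
  rcases T1.eq_empty_or_nonempty with hT1e | ⟨s₂, hs₂⟩
  · refine ⟨{-2, 0, 2}, ⟨0, by decide⟩, ?_⟩
    rw [hsplit1, hT1e, Finset.sum_empty, add_zero]
    exact annset_w1 (onepair_rel x hx4 hcent s₁ h₁)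
  · have hs₂T : s₂ ∈ T := hT1sub hs₂
    have h₂ := hTodd s₂ hs₂T
    have hs₂i : s₂⁻¹ ∈ T1 := hT1sym s₂ hs₂
    have hne₂ : s₂ ≠ s₂⁻¹ := hne s₂ hs₂T
    have hmem2 : s₂⁻¹ ∈ T1.erase s₂ := Finset.mem_erase.mpr ⟨fun h => hne₂ h.symm, hs₂i⟩
    set T2 := (T1.erase s₂).erase s₂⁻¹ with hT2def
    have hT2sub : T2 ⊆ T1 := (Finset.erase_subset _ _).trans (Finset.erase_subset _ _)
    have hT2sym : ∀ v ∈ T2, v⁻¹ ∈ T2 := by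
      intro v hv
      simp only [hT2def, Finset.mem_erase] at hv ⊢
      exact ⟨fun h => hv.2.1 (inv_injective h), fun h => hv.1 (by rw [← h, inv_inv]),
        hT1sym v hv.2.2⟩
    have hT2e : T2 = ∅ := by
      by_contra hcon
      obtain ⟨s₃, hs₃⟩ := Finset.nonempty_iff_ne_empty.mpr hcon
      have hs₃i : s₃⁻¹ ∈ T2 := hT2sym s₃ hs₃
      have hne₃ : s₃ ≠ s₃⁻¹ := hne s₃ (hT1sub (hT2sub hs₃))
      have hsubpair : ({s₃, s₃⁻¹} : Finset G) ⊆ T2 := by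
        intro z hz
        rcases Finset.mem_insert.mp hz with rfl | hz
        · exact hs₃
        · rw [Finset.mem_singleton.mp hz]; exact hs₃i
      have hcard2 : 2 ≤ T2.card := by
        rw [← Finset.card_pair hne₃]
        exact Finset.card_le_card hsubpair
      have c1 : (T.erase s₁).card = T.card - 1 := Finset.card_erase_of_mem hs₁
      have c2 : T1.card = (T.erase s₁).card - 1 := by
        rw [hT1def]; exact Finset.card_erase_of_mem hmem1
      have c3 : (T1.erase s₂).card = T1.card - 1 := Finset.card_erase_of_mem hs₂
      have c4 : T2.card = (T1.erase s₂).card - 1 := by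
        rw [hT2def]; exact Finset.card_erase_of_mem hmem2
      have p1 : 1 ≤ (T.erase s₁).card := Finset.card_pos.mpr ⟨s₁⁻¹, hmem1⟩
      have p2 : 1 ≤ T.card := Finset.card_pos.mpr ⟨s₁, hs₁⟩
      have p3 : 1 ≤ T1.card := Finset.card_pos.mpr ⟨s₂, hs₂⟩
      have p4 : 1 ≤ (T1.erase s₂).card := Finset.card_pos.mpr ⟨s₂⁻¹, hmem2⟩
      omega
    have hsplit2 : ∑ s ∈ T1, of' s = (of' s₂ + of' s₂⁻¹) + ∑ s ∈ T2, of' s := by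
      rw [← Finset.add_sum_erase _ _ hs₂, ← Finset.add_sum_erase _ _ hmem2, add_assoc]
    have hStot : ∑ s ∈ T, of' s = of' s₁ + of' s₁⁻¹ + (of' s₂ + of' s₂⁻¹) := by
      rw [hsplit1, hsplit2, hT2e, Finset.sum_empty, add_zero]
    rcases hpair s₁ s₂ h₁ h₂ with hv | hv
    · refine ⟨{-4, -2, 0, 2, 4}, ⟨0, by decide⟩, ?_⟩
      rw [hStot]
      exact annset_w2 (twopair_rel P x hx4 hcent hoddP hcube s₁ s₂ h₁ h₂ _ rfl hv)
    · refine ⟨{-4, -2, 0, 2, 4}, ⟨0, by decide⟩, ?_⟩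
      have hx2inv : (x^2)⁻¹ = x^2 := inv_eq_of_mul_eq_one_right hx4
      have h₂' : (s₂⁻¹)^2 = x^2 := by
        rw [inv_pow, h₂, hx2inv]
      have hv' : s₁ * (s₂⁻¹)⁻¹ ∈ P := by rw [inv_inv]; exact hv
      have hrel := twopair_rel P x hx4 hcent hoddP hcube s₁ s₂⁻¹ h₁ h₂' _ rfl hv'
      simp only [inv_inv] at hrel
      have hW' : of' s₁ + of' s₁⁻¹ + (of' s₂⁻¹ + of' s₂)
          = of' s₁ + of' s₁⁻¹ + (of' s₂ + of' s₂⁻¹) := by abel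
      rw [hW'] at hrel
      rw [hStot]
      exact annset_w2 hrel


end Odd

theorem dic_in_G5 (n : ℕ) (G : Type*) [Group G] [Finite G]
    (P : Subgroup G) [P.Normal]
    (hPab : ∀ a b : G, a ∈ P → b ∈ P → a * b = b * a)
    (hPexp : ∀ p : G, p ∈ P → p ^ 3 = 1)
    (hPcard : Nat.card P = 3 ^ (n + 1))
    (x : G) (hx : orderOf x = 4)
    (hinv : ∀ u : G, u ∈ P → x⁻¹ * u * x = u⁻¹)
    (hgen : Subgroup.closure ((P : Set G) ∪ {x}) = ⊤)
    (hcard : Nat.card G = 4 * 3 ^ (n + 1)) :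
    ∀ S : Finset G, (1 : G) ∉ S → (∀ s ∈ S, s⁻¹ ∈ S) → S.card ≤ 5 →
      IsIntegralGraph (cayley (S : Set G)) := by
  classical
  letI : Fintype G := Fintype.ofFinite G
  letI : DecidableEq G := Classical.decEq G
  intro S hS1 hSsym hScard
  -- ===== basic group facts =====
  have hx4' : x^4 = 1 := by rw [← hx]; exact pow_orderOf_eq_one x
  have hx4 : x^2 * x^2 = 1 := by rw [← pow_add]; exact hx4'
  have hx2ne : x^2 ≠ 1 := by
    intro h
    have hdvd : orderOf x ∣ 2 := orderOf_dvd_of_pow_eq_one h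
    rw [hx] at hdvd
    norm_num at hdvd
  have hcube : ∀ u : G, u ∈ P → u * u = u⁻¹ := by
    intro u hu
    have h3 : u * u * u = 1 := by
      have := hPexp u hu
      rw [pow_succ, pow_succ, pow_one] at this
      exact this
    exact eq_inv_of_mul_eq_one_left h3
  have hxux : ∀ u : G, u ∈ P → x * u * x⁻¹ = u⁻¹ := by
    intro u hu
    have h := hinv u⁻¹ (inv_mem hu)
    rw [inv_inv] at h
    have h2 : x * (x⁻¹ * u⁻¹ * x) * x⁻¹ = u⁻¹ := by group
    rw [h] at h2
    exact h2
  have hxu : ∀ u : G, u ∈ P → x * u = u⁻¹ * x := by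
    intro u hu
    have := hxux u hu
    rw [← this]
    group
  have hcentP : ∀ u : G, u ∈ P → x^2 * u = u * x^2 := by
    intro u hu
    calc x^2 * u = x * (x * u) := by rw [pow_two, mul_assoc]
      _ = x * (u⁻¹ * x) := by rw [hxu u hu]
      _ = (x * u⁻¹) * x := by rw [mul_assoc]
      _ = (u * x) * x := by rw [hxu u⁻¹ (inv_mem hu), inv_inv]
      _ = u * x^2 := by rw [pow_two, mul_assoc]
  have hcent : ∀ g : G, x^2 * g = g * x^2 := by
    have hle : Subgroup.closure ((P : Set G) ∪ {x}) ≤ Subgroup.centralizer {x^2} := by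
      rw [Subgroup.closure_le]
      rintro g hg
      rcases hg with hgP | hgx
      · rw [SetLike.mem_coe, Subgroup.mem_centralizer_iff]
        rintro h hh
        rw [Set.mem_singleton_iff] at hh
        subst hh
        exact hcentP g hgP
      · rw [Set.mem_singleton_iff] at hgx
        subst hgx
        rw [SetLike.mem_coe, Subgroup.mem_centralizer_iff]
        rintro h hh
        rw [Set.mem_singleton_iff] at hh
        subst hh
        group
    intro g
    have hmem : g ∈ Subgroup.centralizer {x^2} := hle (by rw [hgen]; exact Subgroup.mem_top g)
    exact Subgroup.mem_centralizer_iff.mp hmem _ rfl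
  have hx3u : ∀ u : G, u ∈ P → x^3 * u = u⁻¹ * x^3 := by
    intro u hu
    calc x^3 * u = x^2 * (x * u) := by group
      _ = x^2 * (u⁻¹ * x) := by rw [hxu u hu]
      _ = (x^2 * u⁻¹) * x := by rw [mul_assoc]
      _ = (u⁻¹ * x^2) * x := by rw [hcentP u⁻¹ (inv_mem hu)]
      _ = u⁻¹ * x^3 := by group
  -- ===== quotient facts =====
  set q : G →* G ⧸ P := QuotientGroup.mk' P with hq
  have hidx : P.index * Nat.card P = Nat.card G := Subgroup.index_mul_card P
  rw [hPcard, hcard] at hidx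
  have hQcard : Nat.card (G ⧸ P) = 4 := by
    have h3 : 0 < (3:ℕ)^(n+1) := pow_pos (by norm_num) _
    have hidx4 : P.index = 4 := Nat.eq_of_mul_eq_mul_right h3 hidx
    rw [← hidx4]
    rfl
  have hQgen : ∀ g : G ⧸ P, g ∈ Subgroup.zpowers (q x) := by
    have hmap : Subgroup.map q ⊤ = ⊤ :=
      Subgroup.map_top_of_surjective q (QuotientGroup.mk'_surjective P)
    rw [← hgen, MonoidHom.map_closure] at hmap
    have hsub : Subgroup.closure (q '' ((P : Set G) ∪ {x})) ≤ Subgroup.zpowers (q x) := by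
      rw [Subgroup.closure_le]
      rintro g ⟨a, ha, rfl⟩
      rcases ha with haP | hax
      · have h1 : q a = 1 := (QuotientGroup.eq_one_iff a).mpr haP
        rw [SetLike.mem_coe, h1]
        exact Subgroup.one_mem _
      · rw [Set.mem_singleton_iff] at hax
        subst hax
        exact Subgroup.mem_zpowers _
    intro g
    have hgt : g ∈ (⊤ : Subgroup (G ⧸ P)) := Subgroup.mem_top g
    rw [← hmap] at hgt
    exact hsub hgt
  have hxiord : orderOf (q x) = 4 := by
    have h1 : Subgroup.zpowers (q x) = ⊤ := by
      rw [eq_top_iff]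
      intro g _
      exact hQgen g
    have h2 : Nat.card (Subgroup.zpowers (q x)) = orderOf (q x) := Nat.card_zpowers (q x)
    rw [h1, Subgroup.card_top, hQcard] at h2
    exact h2.symm
  have hx2P : x^2 ∉ P := by
    intro hmem
    have h1 : q (x^2) = 1 := (QuotientGroup.eq_one_iff _).mpr hmem
    rw [map_pow] at h1
    have h2 : orderOf (q x) ∣ 2 := orderOf_dvd_of_pow_eq_one h1
    rw [hxiord] at h2
    norm_num at h2
  have hcoset : ∀ (g : G) (jn : ℕ), q g = (q x)^jn → ∃ p, p ∈ P ∧ g = p * x^jn := by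
    intro g jn hqq
    refine ⟨g * (x^jn)⁻¹, ?_, by group⟩
    rw [← QuotientGroup.eq_one_iff (g * (x^jn)⁻¹)]
    show q _ = 1
    rw [map_mul, map_inv, map_pow, hqq, mul_inv_cancel]
  have hclass : ∀ g : G, ∃ p, p ∈ P ∧ (g = p ∨ g = p * x ∨ g = p * x^2 ∨ g = p * x^3) := by
    intro g
    obtain ⟨k, hk⟩ := Subgroup.mem_zpowers_iff.mp (hQgen (q g))
    have hx4Q : (q x) ^ (4:ℤ) = 1 := by
      have : ((q x) ^ (4:ℕ) : G ⧸ P) = 1 := by rw [← map_pow, hx4', map_one]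
      exact_mod_cast this
    have hmod : (q x) ^ k = (q x) ^ (k % 4) := by
      conv_lhs => rw [← Int.mul_ediv_add_emod k 4]
      rw [zpow_add, zpow_mul, hx4Q, one_zpow, one_mul]
    have h0 : 0 ≤ k % 4 := Int.emod_nonneg k (by norm_num)
    have h4 : k % 4 < 4 := Int.emod_lt_of_pos k (by norm_num)
    interval_cases h : k % 4
    · obtain ⟨p, hp, hgp⟩ := hcoset g 0 (by rw [← hk, hmod]; norm_cast)
      exact ⟨p, hp, Or.inl (by rw [hgp, pow_zero, mul_one])⟩
    · obtain ⟨p, hp, hgp⟩ := hcoset g 1 (by rw [← hk, hmod]; norm_cast)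
      exact ⟨p, hp, Or.inr (Or.inl (by rw [hgp, pow_one]))⟩
    · obtain ⟨p, hp, hgp⟩ := hcoset g 2 (by rw [← hk, hmod]; norm_cast)
      exact ⟨p, hp, Or.inr (Or.inr (Or.inl hgp))⟩
    · obtain ⟨p, hp, hgp⟩ := hcoset g 3 (by rw [← hk, hmod]; norm_cast)
      exact ⟨p, hp, Or.inr (Or.inr (Or.inr hgp))⟩
  -- squares of coset elements
  have hsq1 : ∀ p : G, p ∈ P → (p * x)^2 = x^2 := by
    intro p hp
    calc (p*x)^2 = p * (x * p) * x := by rw [pow_two]; group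
      _ = p * (p⁻¹ * x) * x := by rw [hxu p hp]
      _ = x^2 := by rw [pow_two]; group
  have hsq3 : ∀ p : G, p ∈ P → (p * x^3)^2 = x^2 := by
    intro p hp
    have h1 : (p * x^3)^2 = p * (x^3 * p) * x^3 := by rw [pow_two]; group
    rw [h1, hx3u p hp]
    calc p * (p⁻¹ * x^3) * x^3 = x^2 * (x^2 * x^2) := by group
      _ = x^2 := by rw [hx4, mul_one]
  have hsq2 : ∀ p : G, p ∈ P → (p * x^2)^2 = p * p := by
    intro p hp
    calc (p*x^2)^2 = p * (x^2 * p) * x^2 := by rw [pow_two]; group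
      _ = p * (p * x^2) * x^2 := by rw [hcentP p hp]
      _ = (p * p) * (x^2 * x^2) := by group
      _ = p * p := by rw [hx4, mul_one]
  have hoddform : ∀ g : G, g^2 = x^2 → ∃ p, p ∈ P ∧ (g = p * x ∨ g = p * x^3) := by
    intro g hg
    obtain ⟨p, hp, hc⟩ := hclass g
    rcases hc with rfl | rfl | rfl | rfl
    · exfalso
      apply hx2P
      rw [← hg, pow_two]
      exact mul_mem hp hp
    · exact ⟨p, hp, Or.inl rfl⟩
    · exfalso
      apply hx2P
      rw [← hg, hsq2 p hp]
      exact mul_mem hp hp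
    · exact ⟨p, hp, Or.inr rfl⟩
  have hevenform : ∀ g : G, g^2 ≠ x^2 → g ∉ P → ∃ p, p ∈ P ∧ g = p * x^2 := by
    intro g hg hgP
    obtain ⟨p, hp, hc⟩ := hclass g
    rcases hc with rfl | rfl | rfl | rfl
    · exact absurd hp hgP
    · exact absurd (hsq1 p hp) hg
    · exact ⟨p, hp, rfl⟩
    · exact absurd (hsq3 p hp) hg
  have hoddP : ∀ s : G, s^2 = x^2 → ∀ v : G, v ∈ P → s * v = v⁻¹ * s := by
    intro s hs v hv
    obtain ⟨p, hp, hc⟩ := hoddform s hs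
    rcases hc with rfl | rfl
    · calc p * x * v = p * (x * v) := by group
        _ = p * (v⁻¹ * x) := by rw [hxu v hv]
        _ = (p * v⁻¹) * x := by group
        _ = (v⁻¹ * p) * x := by rw [hPab p v⁻¹ hp (inv_mem hv)]
        _ = v⁻¹ * (p * x) := by group
    · calc p * x^3 * v = p * (x^3 * v) := by group
        _ = p * (v⁻¹ * x^3) := by rw [hx3u v hv]
        _ = (p * v⁻¹) * x^3 := by group
        _ = (v⁻¹ * p) * x^3 := by rw [hPab p v⁻¹ hp (inv_mem hv)]
        _ = v⁻¹ * (p * x^3) := by group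
  have hpairP : ∀ s₁ s₂ : G, s₁^2 = x^2 → s₂^2 = x^2 → s₁ * s₂⁻¹ ∈ P ∨ s₁ * s₂ ∈ P := by
    intro s₁ s₂ h1 h2
    obtain ⟨p₁, hp₁, hc₁⟩ := hoddform s₁ h1
    obtain ⟨p₂, hp₂, hc₂⟩ := hoddform s₂ h2
    rcases hc₁ with rfl | rfl <;> rcases hc₂ with rfl | rfl
    · left
      have he : (p₁ * x) * (p₂ * x)⁻¹ = p₁ * p₂⁻¹ := by group
      rw [he]; exact mul_mem hp₁ (inv_mem hp₂)
    · right
      have he : (p₁ * x) * (p₂ * x^3) = p₁ * (x * p₂) * x^3 := by group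
      rw [he, hxu p₂ hp₂]
      have he2 : p₁ * (p₂⁻¹ * x) * x^3 = (p₁ * p₂⁻¹) * x^4 := by group
      rw [he2, hx4', mul_one]
      exact mul_mem hp₁ (inv_mem hp₂)
    · right
      have he : (p₁ * x^3) * (p₂ * x) = p₁ * (x^3 * p₂) * x := by group
      rw [he, hx3u p₂ hp₂]
      have he2 : p₁ * (p₂⁻¹ * x^3) * x = (p₁ * p₂⁻¹) * x^4 := by group
      rw [he2, hx4', mul_one]
      exact mul_mem hp₁ (inv_mem hp₂)
    · left
      have he : (p₁ * x^3) * (p₂ * x^3)⁻¹ = p₁ * p₂⁻¹ := by group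
      rw [he]; exact mul_mem hp₁ (inv_mem hp₂)
  have hx2inv : (x^2)⁻¹ = x^2 := inv_eq_of_mul_eq_one_right hx4
  have hinvform2 : ∀ r : G, r ∈ P → (r * x^2)⁻¹ = r⁻¹ * x^2 := by
    intro r hr
    refine inv_eq_of_mul_eq_one_right ?_
    calc (r * x^2) * (r⁻¹ * x^2) = r * (x^2 * r⁻¹) * x^2 := by group
      _ = r * (r⁻¹ * x^2) * x^2 := by rw [hcentP r⁻¹ (inv_mem hr)]
      _ = x^2 * x^2 := by group
      _ = 1 := hx4
  have hodd2 : ∀ s : G, s^2 = x^2 → ∀ r : G, r ∈ P → s * (r * x^2) = (r * x^2)⁻¹ * s := by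
    intro s hs r hr
    rw [hinvform2 r hr]
    calc s * (r * x^2) = (s * r) * x^2 := by group
      _ = (r⁻¹ * s) * x^2 := by rw [hoddP s hs r hr]
      _ = r⁻¹ * (s * x^2) := by group
      _ = r⁻¹ * (x^2 * s) := by rw [hcent s]
      _ = (r⁻¹ * x^2) * s := by group
  -- ===== partition of S =====
  have hsqinv : ∀ s : G, (s⁻¹)^2 = x^2 ↔ s^2 = x^2 := by
    intro s
    rw [inv_pow, inv_eq_iff_eq_inv, hx2inv]
  set Sodd := S.filter (fun s => s^2 = x^2) with hSodddef
  set Sev := S.filter (fun s => ¬ s^2 = x^2) with hSevdef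
  set SP := Sev.filter (fun s => s ∈ P) with hSPdef
  set S2 := Sev.filter (fun s => s ∉ P) with hS2def
  have hSoddsub : Sodd ⊆ S := Finset.filter_subset _ _
  have hSevsub : Sev ⊆ S := Finset.filter_subset _ _
  have hSPsub : SP ⊆ S := (Finset.filter_subset _ _).trans hSevsub
  have hSodd_sym : ∀ s ∈ Sodd, s⁻¹ ∈ Sodd := by
    intro s hs
    rw [hSodddef, Finset.mem_filter] at hs ⊢
    exact ⟨hSsym s hs.1, (hsqinv s).mpr hs.2⟩
  have hSev_sym : ∀ s ∈ Sev, s⁻¹ ∈ Sev := by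
    intro s hs
    rw [hSevdef, Finset.mem_filter] at hs ⊢
    exact ⟨hSsym s hs.1, fun h => hs.2 ((hsqinv s).mp h)⟩
  have hSP_sym : ∀ s ∈ SP, s⁻¹ ∈ SP := by
    intro s hs
    rw [hSPdef, Finset.mem_filter] at hs ⊢
    exact ⟨hSev_sym s hs.1, inv_mem hs.2⟩
  have hS2_sym : ∀ s ∈ S2, s⁻¹ ∈ S2 := by
    intro s hs
    rw [hS2def, Finset.mem_filter] at hs ⊢
    refine ⟨hSev_sym s hs.1, fun h => hs.2 ?_⟩
    have := inv_mem h
    rwa [inv_inv] at this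
  have hS2_form : ∀ s ∈ S2, ∃ p, p ∈ P ∧ s = p * x^2 := by
    intro s hs
    rw [hS2def, Finset.mem_filter] at hs
    have hsev := hs.1
    rw [hSevdef, Finset.mem_filter] at hsev
    exact hevenform s hsev.2 hs.2
  have hSP_mem : ∀ u ∈ SP, u ∈ P := by
    intro u hu
    rw [hSPdef, Finset.mem_filter] at hu
    exact hu.2
  have hSodd_odd : ∀ s ∈ Sodd, s^2 = x^2 := by
    intro s hs
    rw [hSodddef, Finset.mem_filter] at hs
    exact hs.2
  obtain ⟨V1, hV1ne, hV1⟩ := sumP_ann P hPab hcube SP.card SP le_rfl hSP_mem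
    (fun h => hS1 (hSPsub h)) hSP_sym
  obtain ⟨V2, hV2ne, hV2⟩ := sum2_ann P x hPab hcube hcentP hx4 S2.card S2 le_rfl
    hS2_form hS2_sym
  obtain ⟨V3, hV3ne, hV3⟩ := odd_ann P x hx4 hx2ne hcent hoddP hcube hpairP Sodd
    (le_trans (Finset.card_le_card hSoddsub) hScard) hSodd_odd hSodd_sym
  have c12 : Commute (∑ u ∈ SP, MonoidAlgebra.of ℝ G u) (∑ s ∈ S2, MonoidAlgebra.of ℝ G s) := by
    refine Commute.sum_left _ _ _ fun u hu => ?_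
    refine of_commute_sum fun t ht => ?_
    obtain ⟨r, hr, rfl⟩ := hS2_form t ht
    have huP := hSP_mem u hu
    calc u * (r * x^2) = (u * r) * x^2 := by group
      _ = (r * u) * x^2 := by rw [hPab u r huP hr]
      _ = r * (u * x^2) := by group
      _ = r * (x^2 * u) := by rw [hcentP u huP]
      _ = (r * x^2) * u := by group
  have c1o : Commute (∑ u ∈ SP, MonoidAlgebra.of ℝ G u) (∑ s ∈ Sodd, MonoidAlgebra.of ℝ G s) := by
    refine Commute.sum_right _ _ _ fun s hs => ?_
    exact conj_commute_sum hSP_sym fun t ht => hoddP s (hSodd_odd s hs) t (hSP_mem t ht)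
  have c2o : Commute (∑ u ∈ S2, MonoidAlgebra.of ℝ G u) (∑ s ∈ Sodd, MonoidAlgebra.of ℝ G s) := by
    refine Commute.sum_right _ _ _ fun s hs => ?_
    refine conj_commute_sum hS2_sym fun t ht => ?_
    obtain ⟨r, hr, rfl⟩ := hS2_form t ht
    exact hodd2 s (hSodd_odd s hs) r hr
  have hann12 := annSet_add c12 hV1ne hV2ne hV1 hV2
  obtain ⟨v1, hv1⟩ := hV1ne
  obtain ⟨v2, hv2⟩ := hV2ne
  have hannall := annSet_add (Commute.add_left c1o c2o)
    ⟨v1 + v2, Finset.add_mem_add hv1 hv2⟩ hV3ne hann12 hV3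
  have hsplitev : (∑ u ∈ SP, MonoidAlgebra.of ℝ G u) + (∑ s ∈ S2, MonoidAlgebra.of ℝ G s)
      = ∑ s ∈ Sev, MonoidAlgebra.of ℝ G s := by
    rw [hSPdef, hS2def]
    exact Finset.sum_filter_add_sum_filter_not Sev (fun s => s ∈ P) _
  have hsplitall : ((∑ u ∈ SP, MonoidAlgebra.of ℝ G u) + (∑ s ∈ S2, MonoidAlgebra.of ℝ G s))
      + (∑ s ∈ Sodd, MonoidAlgebra.of ℝ G s) = ∑ s ∈ S, MonoidAlgebra.of ℝ G s := by
    rw [hsplitev, hSevdef, hSodddef, add_comm]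
    exact Finset.sum_filter_add_sum_filter_not S (fun s => s^2 = x^2) _
  unfold IsIntegralGraph
  intro μ hμ
  refine spectrum_int_of_annset _ _ ?_ hannall μ hμ
  rw [hsplitall]
  exact adjMatrix_eq_Phi S hS1 hSsym _ rfl
end

section
/- The Cayley graph of the group H₁₆ = ⟨a, b, c | a⁴ = b² = c² = 1, [a,b] = c, [c,a] = [c,b] = 1⟩ of order 16 with connection set {ba, ba⁻¹c, b} has √5 as an eigenvalue; in particular, H₁₆ admits a non-integral Cayley graph with connection set of size 3. -/
def FF {G : Type*} [Group G] (a b c : G) (i j k : ℕ) : G := a ^ i * b ^ j * c ^ k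

lemma comm_trail {G : Type*} [Group G] {x y : G} (h : x * y = y * x) (z : G) :
    x * (y * z) = y * (x * z) := by rw [← mul_assoc, h, mul_assoc]

lemma FF_mul {G : Type*} [Group G] {a b c : G} (hba : b * a = a * b * c)
    (hac : a * c = c * a) (hbc : b * c = c * b) (i j k p q r : ℕ) :
    FF a b c i j k * FF a b c p q r = FF a b c (i + p) (j + q) (j * p + k + r) := by
  have hAC : Commute a c := hac
  have hBC : Commute b c := hbc
  have hca' : ∀ (p : ℕ) (x : G), c ^ p * (a * x) = a * (c ^ p * x) :=
    fun p x => comm_trail ((hAC.symm.pow_left p).eq) x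
  have hcb' : ∀ (p : ℕ) (x : G), c ^ p * (b * x) = b * (c ^ p * x) :=
    fun p x => comm_trail ((hBC.symm.pow_left p).eq) x
  have hba' : ∀ x : G, b * (a * x) = a * (b * (c * x)) := by
    intro x
    rw [← mul_assoc, hba, mul_assoc, mul_assoc]
  have hck : ∀ (m n : ℕ) (x : G), c ^ m * (c ^ n * x) = c ^ (m + n) * x := by
    intro m n x; rw [← mul_assoc, ← pow_add]
  have h1 : ∀ (p : ℕ) (x : G), b * (a ^ p * x) = a ^ p * (b * (c ^ p * x)) := by
    intro p
    induction p with
    | zero => intro x; simp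
    | succ p ih =>
      intro x
      rw [pow_succ, mul_assoc, ih (a * x), hca' p x, hba' (c ^ p * x),
        ← mul_assoc (a ^ p) a, ← pow_succ]
      congr 2
      rw [← mul_assoc, ← pow_succ']
  have hK : ∀ (j p : ℕ) (x : G), b ^ j * (a ^ p * x) = a ^ p * (b ^ j * (c ^ (j * p) * x)) := by
    intro j
    induction j with
    | zero => intro p x; simp
    | succ j ih =>
      intro p x
      rw [pow_succ, mul_assoc, h1 p x, ih p (b * (c ^ p * x))]
      congr 1
      rw [hcb' (j * p), hck (j * p) p, ← mul_assoc, ← pow_succ, Nat.succ_mul]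
  have hcan : ∀ (m p : ℕ) (x : G), c ^ m * (a ^ p * x) = a ^ p * (c ^ m * x) :=
    fun m p x => comm_trail ((hAC.symm.pow_pow m p)) x
  have hcbn : ∀ (m q : ℕ) (x : G), c ^ m * (b ^ q * x) = b ^ q * (c ^ m * x) :=
    fun m q x => comm_trail ((hBC.symm.pow_pow m q)) x
  simp only [FF, mul_assoc]
  rw [hcan k p, hK j p, hck (j * p) k, hcbn (j * p + k) q, ← pow_add c,
    ← mul_assoc (b ^ j), ← pow_add b, ← mul_assoc (a ^ i), ← pow_add a]

lemma FF_mod {G : Type*} [Group G] {a b c : G} (ha : a ^ 4 = 1) (hb : b ^ 2 = 1)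
    (hc : c ^ 2 = 1) (i j k : ℕ) :
    FF a b c i j k = FF a b c (i % 4) (j % 2) (k % 2) := by
  have key : ∀ (x : G) (m n : ℕ), x ^ m = 1 → x ^ n = x ^ (n % m) := by
    intro x m n hx
    conv_lhs => rw [← Nat.div_add_mod n m]
    rw [pow_add, pow_mul, hx, one_pow, one_mul]
  rw [FF, FF, key a 4 i ha, key b 2 j hb, key c 2 k hc]

noncomputable def wvec : Fin 4 → Fin 2 → Fin 2 → ℝ := fun i j k =>
  (if k = 0 then (1 : ℝ) else -1) *
    (if j = 0 then (if i = 0 then Real.sqrt 5 else if i = 2 then -Real.sqrt 5 else 0)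
     else (if i = 0 then 1 else if i = 1 then -2 else if i = 2 then -1 else 2))

noncomputable def Wv : ℕ → ℕ → ℕ → ℝ := fun i j k =>
  wvec ⟨i % 4, Nat.mod_lt _ (by norm_num)⟩ ⟨j % 2, Nat.mod_lt _ (by norm_num)⟩
    ⟨k % 2, Nat.mod_lt _ (by norm_num)⟩

lemma Wv_eq (i j k i' j' k' : ℕ) (h1 : i % 4 = i' % 4) (h2 : j % 2 = j' % 2)
    (h3 : k % 2 = k' % 2) : Wv i j k = Wv i' j' k' := by
  unfold Wv
  congr 1 <;> first | exact Fin.ext h1 | exact Fin.ext h2 | exact Fin.ext h3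

lemma Wv_step (i j k : ℕ) :
    Wv (1 + i) (1 + j) (1 * i + 1 + k) + Wv (3 + i) (1 + j) (1 * i + 0 + k)
      + Wv (0 + i) (1 + j) (1 * i + 0 + k) = Real.sqrt 5 * Wv i j k := by
  have h5 : Real.sqrt 5 * Real.sqrt 5 = 5 := Real.mul_self_sqrt (by norm_num)
  obtain ⟨pm, hpm, hpe⟩ : ∃ t, t < 4 ∧ i % 4 = t := ⟨i % 4, Nat.mod_lt _ (by norm_num), rfl⟩
  obtain ⟨qm, hqm, hqe⟩ : ∃ t, t < 2 ∧ j % 2 = t := ⟨j % 2, Nat.mod_lt _ (by norm_num), rfl⟩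
  obtain ⟨rm, hrm, hre⟩ : ∃ t, t < 2 ∧ k % 2 = t := ⟨k % 2, Nat.mod_lt _ (by norm_num), rfl⟩
  rw [Wv_eq (1 + i) (1 + j) (1 * i + 1 + k) (1 + pm) (1 + qm) (pm + 1 + rm)
      (by omega) (by omega) (by omega),
    Wv_eq (3 + i) (1 + j) (1 * i + 0 + k) (3 + pm) (1 + qm) (pm + rm)
      (by omega) (by omega) (by omega),
    Wv_eq (0 + i) (1 + j) (1 * i + 0 + k) pm (1 + qm) (pm + rm)
      (by omega) (by omega) (by omega),
    Wv_eq i j k pm qm rm (by omega) (by omega) (by omega)]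
  interval_cases pm <;> interval_cases qm <;> interval_cases rm <;>
    norm_num [Wv, wvec, Fin.ext_iff] <;> nlinarith [h5, Real.sqrt_nonneg 5]

open scoped commutatorElement

theorem H16_cayley_not_integral (G : Type*) [Group G] [Finite G]
    (hcard : Nat.card G = 16)
    (a b c : G) (ha : a ^ 4 = 1) (hb : b ^ 2 = 1) (hc : c ^ 2 = 1)
    (hab : ⁅a, b⁆ = c) (hca : ⁅c, a⁆ = 1) (hcb : ⁅c, b⁆ = 1)
    (hgen : Subgroup.closure {a, b} = ⊤) :
    IsAdjEigenvalue (cayley ({b * a, b * a⁻¹ * c, b} : Set G)) (Real.sqrt 5) ∧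
      ¬ IsIntegralGraph (cayley ({b * a, b * a⁻¹ * c, b} : Set G)) := by
  letI : Fintype G := Fintype.ofFinite G
  letI : DecidableEq G := Classical.decEq G
  set S : Set G := {b * a, b * a⁻¹ * c, b} with hSdef
  letI : DecidableRel (cayley S).Adj := Classical.decRel _
  -- basic relations
  have hc2 : c * c = 1 := by rw [← pow_two]; exact hc
  have hca' : c * a = a * c := by
    have h := hca
    rw [commutatorElement_def, mul_inv_eq_one, mul_inv_eq_iff_eq_mul] at h
    exact h
  have hcb' : c * b = b * c := by
    have h := hcb
    rw [commutatorElement_def, mul_inv_eq_one, mul_inv_eq_iff_eq_mul] at h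
    exact h
  have hba : b * a = a * b * c := by
    have h := hab
    rw [commutatorElement_def, mul_inv_eq_iff_eq_mul, mul_inv_eq_iff_eq_mul] at h
    calc b * a = c * (c * (b * a)) := by rw [← mul_assoc, hc2, one_mul]
      _ = c * (a * b) := by rw [← mul_assoc c b a, ← h]
      _ = a * b * c := by rw [← mul_assoc, hca', mul_assoc, hcb', ← mul_assoc]
  have Fmul := FF_mul hba hca'.symm hcb'.symm
  have Fmod := FF_mod (a := a) (b := b) (c := c) ha hb hc
  have F000 : FF a b c 0 0 0 = 1 := by simp [FF]
  have Feq : ∀ {i j k i' j' k' : ℕ}, i % 4 = i' % 4 → j % 2 = j' % 2 → k % 2 = k' % 2 →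
      FF a b c i j k = FF a b c i' j' k' := by
    intro i j k i' j' k' h1 h2 h3
    rw [Fmod, h1, h2, h3, ← Fmod]
  have Fone : ∀ i j k : ℕ, i % 4 = 0 → j % 2 = 0 → k % 2 = 0 → FF a b c i j k = 1 := by
    intro i j k h1 h2 h3
    rw [Feq (i' := 0) (j' := 0) (k' := 0) (by omega) (by omega) (by omega), F000]
  have hainv : a⁻¹ = a ^ 3 := by
    refine inv_eq_of_mul_eq_one_right ?_
    rw [← pow_succ']
    exact ha
  have hS1 : b * a = FF a b c 1 1 1 := by
    simpa [FF] using hba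
  have hS2 : b * a⁻¹ * c = FF a b c 3 1 0 := by
    calc b * a⁻¹ * c = FF a b c 0 1 0 * FF a b c 3 0 1 := by
          rw [hainv]; simp [FF, mul_assoc]
      _ = FF a b c (0 + 3) (1 + 0) (1 * 3 + 0 + 1) := Fmul 0 1 0 3 0 1
      _ = FF a b c 3 1 0 := Feq (by norm_num) (by norm_num) (by norm_num)
  have hS3 : b = FF a b c 0 1 0 := by simp [FF]
  -- surjectivity of the normal form
  have hsurj : ∀ g : G, ∃ i j k : ℕ, g = FF a b c i j k := by
    intro g
    have hg : g ∈ Subgroup.closure ({a, b} : Set G) := by rw [hgen]; exact Subgroup.mem_top g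
    induction hg using Subgroup.closure_induction with
    | mem x hx =>
      rcases hx with rfl | rfl
      · exact ⟨1, 0, 0, by simp [FF]⟩
      · exact ⟨0, 1, 0, by simp [FF]⟩
    | one => exact ⟨0, 0, 0, F000.symm⟩
    | mul x y hx hy ihx ihy =>
      obtain ⟨i, j, k, rfl⟩ := ihx
      obtain ⟨p, q, r, rfl⟩ := ihy
      exact ⟨i + p, j + q, j * p + k + r, Fmul i j k p q r⟩
    | inv x hx ihx =>
      obtain ⟨i, j, k, rfl⟩ := ihx
      refine ⟨3 * i, j, k + j * (3 * i), inv_eq_of_mul_eq_one_right ?_⟩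
      rw [Fmul]
      exact Fone _ _ _ (by omega) (by omega)
        (by generalize j * (3 * i) = m; omega)
  -- the normal form bijection
  set F' : Fin 4 × Fin 2 × Fin 2 → G := fun d => FF a b c d.1 d.2.1 d.2.2 with hF'def
  have hsurj' : Function.Surjective F' := by
    intro g
    obtain ⟨i, j, k, rfl⟩ := hsurj g
    exact ⟨⟨⟨i % 4, by omega⟩, ⟨j % 2, by omega⟩, ⟨k % 2, by omega⟩⟩, (Fmod i j k).symm⟩
  have hbij : Function.Bijective F' := by
    rw [Fintype.bijective_iff_surjective_and_card]
    refine ⟨hsurj', ?_⟩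
    have h16 : Fintype.card G = 16 := by rw [← Nat.card_eq_fintype_card, hcard]
    simp [h16]
  have hFFne : ∀ i j k i' j' k' : ℕ, i < 4 → j < 2 → k < 2 → i' < 4 → j' < 2 → k' < 2 →
      (i, j, k) ≠ (i', j', k') → FF a b c i j k ≠ FF a b c i' j' k' := by
    intro i j k i' j' k' hi hj hk hi' hj' hk' hne heq
    have h2 := hbij.1 (a₁ := ⟨⟨i, hi⟩, ⟨j, hj⟩, ⟨k, hk⟩⟩) (a₂ := ⟨⟨i', hi'⟩, ⟨j', hj'⟩, ⟨k', hk'⟩⟩)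
      heq
    apply hne
    simpa [Prod.ext_iff, Fin.ext_iff] using h2
  -- the three connection elements, their distinctness and inverses
  have ne1 : b * a ≠ 1 := by
    rw [hS1, ← F000]
    exact hFFne 1 1 1 0 0 0 (by norm_num) (by norm_num) (by norm_num) (by norm_num)
      (by norm_num) (by norm_num) (by decide)
  have ne2 : b * a⁻¹ * c ≠ 1 := by
    rw [hS2, ← F000]
    exact hFFne 3 1 0 0 0 0 (by norm_num) (by norm_num) (by norm_num) (by norm_num)
      (by norm_num) (by norm_num) (by decide)
  have ne3 : b ≠ 1 := by
    rw [hS3, ← F000]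
    exact hFFne 0 1 0 0 0 0 (by norm_num) (by norm_num) (by norm_num) (by norm_num)
      (by norm_num) (by norm_num) (by decide)
  have ne12 : b * a ≠ b * a⁻¹ * c := by
    rw [hS1, hS2]
    exact hFFne 1 1 1 3 1 0 (by norm_num) (by norm_num) (by norm_num) (by norm_num)
      (by norm_num) (by norm_num) (by decide)
  have ne13 : b * a ≠ b := by
    intro heq
    exact hFFne 1 1 1 0 1 0 (by norm_num) (by norm_num) (by norm_num) (by norm_num)
      (by norm_num) (by norm_num) (by decide) (by rw [← hS1, ← hS3]; exact heq)
  have ne23 : b * a⁻¹ * c ≠ b := by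
    intro heq
    exact hFFne 3 1 0 0 1 0 (by norm_num) (by norm_num) (by norm_num) (by norm_num)
      (by norm_num) (by norm_num) (by decide) (by rw [← hS2, ← hS3]; exact heq)
  have hinv1 : (b * a)⁻¹ = b * a⁻¹ * c := by
    rw [hS1, hS2]
    refine inv_eq_of_mul_eq_one_right ?_
    rw [Fmul]
    exact Fone _ _ _ (by norm_num) (by norm_num) (by norm_num)
  have hinv2 : (b * a⁻¹ * c)⁻¹ = b * a := by
    rw [hS1, hS2]
    refine inv_eq_of_mul_eq_one_right ?_
    rw [Fmul]
    exact Fone _ _ _ (by norm_num) (by norm_num) (by norm_num)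
  have hinv3 : b⁻¹ = b := by
    rw [hS3]
    refine inv_eq_of_mul_eq_one_right ?_
    rw [Fmul]
    exact Fone _ _ _ (by norm_num) (by norm_num) (by norm_num)
  -- adjacency characterization
  have hadj : ∀ g h : G, (cayley S).Adj g h ↔
      (h = b * a * g ∨ h = b * a⁻¹ * c * g ∨ h = b * g) := by
    intro g h
    rw [cayley, SimpleGraph.fromRel_adj]
    constructor
    · rintro ⟨hgh, hmem | hmem⟩
      · simp only [hSdef, Set.mem_insert_iff, Set.mem_singleton_iff] at hmem
        rcases hmem with h1 | h1 | h1
        · exact Or.inl (by rw [← h1]; group)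
        · exact Or.inr (Or.inl (by rw [← h1]; group))
        · exact Or.inr (Or.inr (by rw [← h1]; group))
      · simp only [hSdef, Set.mem_insert_iff, Set.mem_singleton_iff] at hmem
        rcases hmem with h1 | h1 | h1
        · refine Or.inr (Or.inl ?_)
          have : h = (b * a)⁻¹ * g := by rw [← h1]; group
          rw [this, hinv1]
        · refine Or.inl ?_
          have : h = (b * a⁻¹ * c)⁻¹ * g := by rw [← h1]; group
          rw [this, hinv2]
        · refine Or.inr (Or.inr ?_)
          have : h = b⁻¹ * g := by rw [← h1]; group
          rw [this, hinv3]
    · rintro (rfl | rfl | rfl)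
      · refine ⟨fun hh => ne1 ?_, Or.inl ?_⟩
        · exact right_eq_mul.mp hh
        · show b * a * g * g⁻¹ ∈ S
          rw [mul_inv_cancel_right]
          simp [hSdef]
      · refine ⟨fun hh => ne2 ?_, Or.inl ?_⟩
        · exact right_eq_mul.mp hh
        · show b * a⁻¹ * c * g * g⁻¹ ∈ S
          rw [mul_inv_cancel_right]
          simp [hSdef]
      · refine ⟨fun hh => ne3 ?_, Or.inl ?_⟩
        · exact right_eq_mul.mp hh
        · show b * g * g⁻¹ ∈ S
          rw [mul_inv_cancel_right]
          simp [hSdef]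
  -- neighbor finsets
  have hnbr : ∀ g : G, (cayley S).neighborFinset g =
      {b * a * g, b * a⁻¹ * c * g, b * g} := by
    intro g
    ext x
    rw [SimpleGraph.mem_neighborFinset, hadj]
    simp
  -- the eigenvector
  set e : (Fin 4 × Fin 2 × Fin 2) ≃ G := Equiv.ofBijective F' hbij with hedef
  set v : G → ℝ := fun g => wvec (e.symm g).1 (e.symm g).2.1 (e.symm g).2.2 with hvdef
  have hv : ∀ d : Fin 4 × Fin 2 × Fin 2, v (F' d) = wvec d.1 d.2.1 d.2.2 := by
    intro d
    have h1 : e.symm (F' d) = d := e.symm_apply_apply d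
    rw [hvdef]
    simp only [h1]
  have hvF : ∀ i j k : ℕ, v (FF a b c i j k) = Wv i j k := by
    intro i j k
    rw [Fmod]
    exact hv ⟨⟨i % 4, by omega⟩, ⟨j % 2, by omega⟩, ⟨k % 2, by omega⟩⟩
  have hvb : v b = 1 := by
    rw [hS3, hvF]
    norm_num [Wv, wvec, Fin.ext_iff]
  -- the eigenvalue equation
  have hmain : Matrix.mulVec ((cayley S).adjMatrix ℝ) v = Real.sqrt 5 • v := by
    funext g
    rw [SimpleGraph.adjMatrix_mulVec_apply, hnbr g]
    rw [Finset.sum_insert (by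
        simp only [Finset.mem_insert, Finset.mem_singleton]
        push_neg
        exact ⟨fun hq => ne12 (mul_right_cancel hq), fun hq => ne13 (mul_right_cancel hq)⟩),
      Finset.sum_insert (by
        simp only [Finset.mem_singleton]
        exact fun hq => ne23 (mul_right_cancel hq)),
      Finset.sum_singleton]
    obtain ⟨i, j, k, rfl⟩ := hsurj g
    simp only [Pi.smul_apply, smul_eq_mul]
    have hn1 : v (b * a * FF a b c i j k) = Wv (1 + i) (1 + j) (1 * i + 1 + k) := by
      rw [hS1, Fmul, hvF]
    have hn2 : v (b * a⁻¹ * c * FF a b c i j k) = Wv (3 + i) (1 + j) (1 * i + 0 + k) := by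
      rw [hS2, Fmul, hvF]
    have hn3 : v (b * FF a b c i j k) = Wv (0 + i) (1 + j) (1 * i + 0 + k) := by
      rw [congrArg (fun x => x * FF a b c i j k) hS3, Fmul, hvF]
    rw [hn1, hn2, hn3, hvF, ← add_assoc]
    exact Wv_step i j k
  -- spectrum membership
  have heig : Real.sqrt 5 ∈ spectrum ℝ ((cayley S).adjMatrix ℝ) := by
    rw [spectrum.mem_iff]
    intro hu
    obtain ⟨u, hu⟩ := hu
    have h0 : Matrix.mulVec ((algebraMap ℝ (Matrix G G ℝ)) (Real.sqrt 5)
        - (cayley S).adjMatrix ℝ) v = 0 := by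
      rw [Matrix.sub_mulVec, hmain, Algebra.algebraMap_eq_smul_one, Matrix.smul_mulVec,
        Matrix.one_mulVec, sub_self]
    rw [← hu] at h0
    have h1 : Matrix.mulVec (↑u⁻¹ : Matrix G G ℝ) (Matrix.mulVec (↑u : Matrix G G ℝ) v)
        = v := by
      rw [Matrix.mulVec_mulVec, Units.inv_mul, Matrix.one_mulVec]
    rw [h0, Matrix.mulVec_zero] at h1
    rw [← h1] at hvb
    simp at hvb
  have hirr : Irrational (Real.sqrt 5) :=
    Nat.Prime.irrational_sqrt (by norm_num)
  constructor
  · show Real.sqrt 5 ∈ spectrum ℝ ((cayley S).adjMatrix ℝ)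
    exact heig
  · intro hInt
    have hInt' : ∀ μ ∈ spectrum ℝ ((cayley S).adjMatrix ℝ), ∃ z : ℤ, (z : ℝ) = μ := hInt
    obtain ⟨z, hz⟩ := hInt' _ heig
    rw [← hz] at hirr
    exact Int.not_irrational z hirr
end

section
/- The Cayley graph of the group H₃₂ = ⟨a, b, c | a⁴ = b⁴ = c² = 1, [a,b] = c, [c,a] = [c,b] = 1⟩ of order 32 with connection set {ba, b⁻¹a⁻¹c, b, b⁻¹} has 2√2 as an eigenvalue; in particular, H₃₂ admits a non-integral Cayley graph with connection set of size 4. -/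
open scoped commutatorElement

/-! ### A concrete model of the group H₃₂ -/

structure H32 where
  i : ZMod 2
  j : ZMod 4
  k : ZMod 4
  deriving DecidableEq, Fintype

namespace H32

def ch : ZMod 4 →+* ZMod 2 := ZMod.castHom (show 2 ∣ 4 by norm_num) (ZMod 2)

instance : Mul H32 := ⟨fun x y => ⟨x.i + y.i + ch x.k * ch y.j, x.j + y.j, x.k + y.k⟩⟩
instance : One H32 := ⟨⟨0, 0, 0⟩⟩
instance : Inv H32 := ⟨fun x => ⟨x.i + ch x.k * ch x.j, -x.j, -x.k⟩⟩

lemma mul_def (x y : H32) :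
    x * y = ⟨x.i + y.i + ch x.k * ch y.j, x.j + y.j, x.k + y.k⟩ := rfl
lemma inv_def (x : H32) : x⁻¹ = ⟨x.i + ch x.k * ch x.j, -x.j, -x.k⟩ := rfl
lemma one_def : (1 : H32) = ⟨0, 0, 0⟩ := rfl

lemma two_eq_zero (u : ZMod 2) : u + u = 0 := by
  have h : (2 : ZMod 2) * u = 0 := by
    have h2 : (2 : ZMod 2) = 0 := rfl
    rw [h2, zero_mul]
  linear_combination h

instance : Group H32 where
  mul_assoc x y z := by
    simp only [mul_def, map_add, mk.injEq]
    refine ⟨by ring, add_assoc _ _ _, add_assoc _ _ _⟩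
  one_mul x := by simp [mul_def, one_def]
  mul_one x := by simp [mul_def, one_def]
  inv_mul_cancel x := by
    simp only [inv_def, mul_def, map_neg, one_def, mk.injEq, neg_add_cancel, and_true]
    linear_combination two_eq_zero x.i

def a0 : H32 := ⟨0, 0, 1⟩
def b0 : H32 := ⟨0, 1, 0⟩
def c0 : H32 := ⟨1, 0, 0⟩

def sgn (u : ZMod 2) : ℤ := if u = 0 then 1 else -1

def p (x : H32) : ℤ :=
  if x.k = 0 then sgn x.i else if x.k = 1 then sgn (x.i + ch x.j)
  else if x.k = 2 then -sgn x.i else -sgn (x.i + ch x.j)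

def q (x : H32) : ℤ :=
  if x.k = 1 then -sgn (x.i + ch x.j) else if x.k = 3 then sgn (x.i + ch x.j) else 0

def nbr (g h : H32) : Prop :=
  g ≠ h ∧ ((h * g⁻¹ = b0 * a0 ∨ h * g⁻¹ = b0⁻¹ * a0⁻¹ * c0 ∨ h * g⁻¹ = b0 ∨ h * g⁻¹ = b0⁻¹)
    ∨ (g * h⁻¹ = b0 * a0 ∨ g * h⁻¹ = b0⁻¹ * a0⁻¹ * c0 ∨ g * h⁻¹ = b0 ∨ g * h⁻¹ = b0⁻¹))

instance : DecidableRel nbr := fun _ _ => by unfold nbr; infer_instance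

set_option maxHeartbeats 4000000 in
lemma eigenP : ∀ g : H32, (∑ h : H32, (if nbr g h then p h else 0)) = 4 * q g := by decide

set_option maxHeartbeats 4000000 in
lemma eigenQ : ∀ g : H32, (∑ h : H32, (if nbr g h then q h else 0)) = 2 * p g := by decide

lemma card_eq : Nat.card H32 = 32 := by
  rw [Nat.card_eq_fintype_card]; decide

lemma p_one : p 1 = 1 := by decide

lemma q_one : q 1 = 0 := by decide

end H32

/-! ### Transport to an abstract group satisfying the presentation -/

section Transport

variable {G : Type*} [Group G] (a b c : G)

/-- The candidate isomorphism, sending the normal form to the corresponding word. -/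
def phi (x : H32) : G := c ^ x.i.val * b ^ x.j.val * a ^ x.k.val

variable (ha : a ^ 4 = 1) (hb : b ^ 4 = 1) (hc : c ^ 2 = 1)
  (hab : ⁅a, b⁆ = c) (hca : ⁅c, a⁆ = 1) (hcb : ⁅c, b⁆ = 1)

section
variable {a c}
include hc
lemma cpow_mod (m : ℕ) : c ^ m = c ^ (m % 2) := by
  conv_lhs => rw [← Nat.div_add_mod m 2]
  rw [pow_add, pow_mul, hc, one_pow, one_mul]
end

section
variable {a}
include ha
lemma apow_mod (m : ℕ) : a ^ m = a ^ (m % 4) := by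
  conv_lhs => rw [← Nat.div_add_mod m 4]
  rw [pow_add, pow_mul, ha, one_pow, one_mul]
end

include hab hca hcb

omit hca hcb in
lemma ab_eq : a * b = c * (b * a) := by
  have h := hab
  rw [commutatorElement_def] at h
  calc a * b = (a * b * a⁻¹ * b⁻¹) * (b * a) := by group
    _ = c * (b * a) := by rw [h]

omit hca in
lemma a_bpow (n : ℕ) : a * b ^ n = c ^ n * (b ^ n * a) := by
  have hcb' : Commute c b := commutatorElement_eq_one_iff_commute.mp hcb
  induction n with
  | zero => simp
  | succ n ih =>
    calc a * b ^ (n + 1) = (a * b ^ n) * b := by rw [pow_succ, mul_assoc]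
      _ = c ^ n * (b ^ n * (a * b)) := by rw [ih]; group
      _ = c ^ n * (b ^ n * (c * (b * a))) := by rw [ab_eq a b c hab]
      _ = c ^ n * ((b ^ n * c) * (b * a)) := by group
      _ = c ^ n * ((c * b ^ n) * (b * a)) := by rw [← (hcb'.pow_right n).eq]
      _ = c ^ (n + 1) * (b ^ (n + 1) * a) := by rw [pow_succ, pow_succ]; group

lemma apow_bpow (m n : ℕ) : a ^ m * b ^ n = c ^ (m * n) * (b ^ n * a ^ m) := by
  have hca' : Commute c a := commutatorElement_eq_one_iff_commute.mp hca
  induction m with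
  | zero => simp
  | succ m ih =>
    calc a ^ (m + 1) * b ^ n = a * (a ^ m * b ^ n) := by rw [pow_succ']; group
      _ = a * (c ^ (m * n) * (b ^ n * a ^ m)) := by rw [ih]
      _ = (a * c ^ (m * n)) * (b ^ n * a ^ m) := by group
      _ = (c ^ (m * n) * a) * (b ^ n * a ^ m) := by rw [(hca'.symm.pow_right (m * n)).eq]
      _ = c ^ (m * n) * ((a * b ^ n) * a ^ m) := by group
      _ = c ^ (m * n) * ((c ^ n * (b ^ n * a)) * a ^ m) := by
          rw [a_bpow a b c hab hcb]
      _ = c ^ ((m + 1) * n) * (b ^ n * a ^ (m + 1)) := by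
          rw [Nat.succ_mul, pow_add, pow_succ]; group

include ha hb hc

lemma phi_mul (x y : H32) : phi a b c (x * y) = phi a b c x * phi a b c y := by
  have hca' : Commute c a := commutatorElement_eq_one_iff_commute.mp hca
  have hcb' : Commute c b := commutatorElement_eq_one_iff_commute.mp hcb
  set i1 := x.i.val; set j1 := x.j.val; set k1 := x.k.val
  set i2 := y.i.val; set j2 := y.j.val; set k2 := y.k.val
  have hcsum : ∀ u v : ZMod 2, c ^ (u + v).val = c ^ u.val * c ^ v.val := by
    intro u v
    rw [ZMod.val_add, ← cpow_mod hc, pow_add]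
  have hbsum : ∀ u v : ZMod 4, b ^ (u + v).val = b ^ u.val * b ^ v.val := by
    intro u v
    rw [ZMod.val_add, ← apow_mod hb, pow_add]
  have hasum : ∀ u v : ZMod 4, a ^ (u + v).val = a ^ u.val * a ^ v.val := by
    intro u v
    rw [ZMod.val_add, ← apow_mod ha, pow_add]
  have hct : c ^ ((H32.ch x.k * H32.ch y.j).val) = c ^ (k1 * j2) := by
    have h1 : H32.ch x.k = ((k1 : ℕ) : ZMod 2) := by
      simp only [H32.ch, ZMod.castHom_apply]
      exact (ZMod.natCast_val x.k).symm
    have h2 : H32.ch y.j = ((j2 : ℕ) : ZMod 2) := by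
      simp only [H32.ch, ZMod.castHom_apply]
      exact (ZMod.natCast_val y.j).symm
    rw [h1, h2, ← Nat.cast_mul, ZMod.val_natCast, ← cpow_mod hc]
  have key := apow_bpow a b c hab hca hcb k1 j2
  have hLHS : phi a b c (x * y)
      = (c ^ i1 * c ^ i2 * c ^ (k1 * j2)) * (b ^ j1 * b ^ j2) * (a ^ k1 * a ^ k2) := by
    show c ^ ((x.i + y.i + H32.ch x.k * H32.ch y.j).val) * b ^ ((x.j + y.j).val)
        * a ^ ((x.k + y.k).val)
      = _
    rw [hcsum (x.i + y.i) (H32.ch x.k * H32.ch y.j), hcsum x.i y.i, hct, hbsum, hasum]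
  rw [hLHS]
  show _ = (c ^ i1 * b ^ j1 * a ^ k1) * (c ^ i2 * b ^ j2 * a ^ k2)
  have h1 : (b ^ j1 * a ^ k1) * c ^ i2 = c ^ i2 * (b ^ j1 * a ^ k1) :=
    (((hcb'.pow_right j1).mul_right (hca'.pow_right k1)).pow_left i2).eq.symm
  have h2 : b ^ j1 * c ^ (k1 * j2) = c ^ (k1 * j2) * b ^ j1 :=
    ((hcb'.pow_right j1).pow_left (k1 * j2)).eq.symm
  calc (c ^ i1 * c ^ i2 * c ^ (k1 * j2)) * (b ^ j1 * b ^ j2) * (a ^ k1 * a ^ k2)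
      = c ^ i1 * (c ^ i2 * ((c ^ (k1 * j2) * b ^ j1) * (b ^ j2 * a ^ k1)) * a ^ k2) := by
        group
    _ = c ^ i1 * (c ^ i2 * ((b ^ j1 * c ^ (k1 * j2)) * (b ^ j2 * a ^ k1)) * a ^ k2) := by
        rw [h2]
    _ = c ^ i1 * (c ^ i2 * (b ^ j1 * (c ^ (k1 * j2) * (b ^ j2 * a ^ k1))) * a ^ k2) := by
        group
    _ = c ^ i1 * (c ^ i2 * (b ^ j1 * (a ^ k1 * b ^ j2)) * a ^ k2) := by rw [← key]
    _ = c ^ i1 * (((b ^ j1 * a ^ k1) * c ^ i2) * (b ^ j2 * a ^ k2)) := by rw [h1]; group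
    _ = (c ^ i1 * b ^ j1 * a ^ k1) * (c ^ i2 * b ^ j2 * a ^ k2) := by group

end Transport


lemma aux_spec {G : Type*} [Group G] [Fintype G] [DecidableEq G]
    (hcard : Nat.card G = 32)
    (a b c : G) (ha : a ^ 4 = 1) (hb : b ^ 4 = 1) (hc : c ^ 2 = 1)
    (hab : ⁅a, b⁆ = c) (hca : ⁅c, a⁆ = 1) (hcb : ⁅c, b⁆ = 1)
    (hgen : Subgroup.closure {a, b} = ⊤)
    [inst : DecidableRel (cayley ({b * a, b⁻¹ * a⁻¹ * c, b, b⁻¹} : Set G)).Adj] :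
    2 * Real.sqrt 2 ∈
      spectrum ℝ ((cayley ({b * a, b⁻¹ * a⁻¹ * c, b, b⁻¹} : Set G)).adjMatrix ℝ) := by
  -- the isomorphism
  let φm : H32 →* G := MonoidHom.mk' (phi a b c)
    (fun x y => phi_mul a b c ha hb hc hab hca hcb x y)
  have hval0 : (0 : ZMod 2).val = 0 := rfl
  have hval1 : (1 : ZMod 2).val = 1 := rfl
  have hval0' : (0 : ZMod 4).val = 0 := rfl
  have hval1' : (1 : ZMod 4).val = 1 := rfl
  have he_a : φm H32.a0 = a := by
    show c ^ (0 : ZMod 2).val * b ^ (0 : ZMod 4).val * a ^ (1 : ZMod 4).val = a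
    rw [hval0, hval0', hval1']; group
  have he_b : φm H32.b0 = b := by
    show c ^ (0 : ZMod 2).val * b ^ (1 : ZMod 4).val * a ^ (0 : ZMod 4).val = b
    rw [hval0, hval0', hval1']; group
  have he_c : φm H32.c0 = c := by
    show c ^ (1 : ZMod 2).val * b ^ (0 : ZMod 4).val * a ^ (0 : ZMod 4).val = c
    rw [hval1, hval0']; group
  have hsurj : Function.Surjective φm := by
    have hle : (⊤ : Subgroup G) ≤ φm.range := by
      rw [← hgen]
      refine (Subgroup.closure_le _).mpr ?_
      rintro x hx
      simp only [Set.mem_insert_iff, Set.mem_singleton_iff] at hx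
      rcases hx with rfl | rfl
      · exact ⟨H32.a0, he_a⟩
      · exact ⟨H32.b0, he_b⟩
    intro g
    obtain ⟨x, hx⟩ := hle (Subgroup.mem_top g)
    exact ⟨x, hx⟩
  have hbij : Function.Bijective φm :=
    (Nat.bijective_iff_surjective_and_card φm).mpr ⟨hsurj, by rw [H32.card_eq, hcard]⟩
  let e : H32 ≃* G := MulEquiv.ofBijective φm hbij
  have ea : e H32.a0 = a := he_a
  have eb : e H32.b0 = b := he_b
  have ec : e H32.c0 = c := he_c
  have eS1 : e (H32.b0 * H32.a0) = b * a := by rw [map_mul, eb, ea]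
  have eS2 : e (H32.b0⁻¹ * H32.a0⁻¹ * H32.c0) = b⁻¹ * a⁻¹ * c := by
    rw [map_mul, map_mul, map_inv, map_inv, ea, eb, ec]
  have eS3 : e H32.b0⁻¹ = b⁻¹ := by rw [map_inv, eb]
  have hadj : ∀ x y : H32, (cayley ({b * a, b⁻¹ * a⁻¹ * c, b, b⁻¹} : Set G)).Adj (e x) (e y) ↔ H32.nbr x y := by
    intro x y
    show (SimpleGraph.fromRel _).Adj _ _ ↔ _
    rw [SimpleGraph.fromRel_adj]
    unfold H32.nbr
    rw [← map_inv e x, ← map_mul, ← map_inv e y, ← map_mul, ← eS1, ← eS2, ← eS3, ← eb]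
    simp only [ne_eq, Set.mem_insert_iff, Set.mem_singleton_iff,
      EmbeddingLike.apply_eq_iff_eq]
  -- the eigenvector
  set s := Real.sqrt 2 with hs
  have s2 : s * s = 2 := Real.mul_self_sqrt (by norm_num)
  set μ : ℝ := 2 * s with hμ
  set v : G → ℝ := fun g => (H32.p (e.symm g) : ℝ) + s * (H32.q (e.symm g) : ℝ) with hv
  have hveq : ∀ y : H32, v (e y) = (H32.p y : ℝ) + s * (H32.q y : ℝ) := by
    intro y; rw [hv]; simp
  have hA : ∀ x y : H32, (cayley ({b * a, b⁻¹ * a⁻¹ * c, b, b⁻¹} : Set G)).adjMatrix ℝ (e x) (e y) = if H32.nbr x y then (1 : ℝ) else 0 := by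
    intro x y
    rw [SimpleGraph.adjMatrix_apply]
    by_cases hxy : H32.nbr x y
    · rw [if_pos ((hadj x y).mpr hxy), if_pos hxy]
    · rw [if_neg (fun hh => hxy ((hadj x y).mp hh)), if_neg hxy]
  have h32sum : ∀ F : G → ℝ, ∑ h : G, F h = ∑ y : H32, F (e y) :=
    fun F => (Equiv.sum_comp e.toEquiv F).symm
  have hsum : ∀ g : G, (∑ h : G, (cayley ({b * a, b⁻¹ * a⁻¹ * c, b, b⁻¹} : Set G)).adjMatrix ℝ g h * v h) = μ * v g := by
    intro g
    obtain ⟨x, rfl⟩ : ∃ x, g = e x := ⟨e.symm g, (e.apply_symm_apply g).symm⟩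
    rw [h32sum (fun h => (cayley ({b * a, b⁻¹ * a⁻¹ * c, b, b⁻¹} : Set G)).adjMatrix ℝ (e x) h * v h)]
    have hterm : ∀ y : H32, (cayley ({b * a, b⁻¹ * a⁻¹ * c, b, b⁻¹} : Set G)).adjMatrix ℝ (e x) (e y) * v (e y)
        = (if H32.nbr x y then (H32.p y : ℝ) else 0)
          + s * (if H32.nbr x y then (H32.q y : ℝ) else 0) := by
      intro y
      rw [hA, hveq]
      by_cases hxy : H32.nbr x y <;> simp [hxy]
    rw [Finset.sum_congr rfl (fun y _ => hterm y), Finset.sum_add_distrib, ← Finset.mul_sum]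
    have hcastP : (∑ y : H32, if H32.nbr x y then (H32.p y : ℝ) else 0)
        = ((∑ y : H32, if H32.nbr x y then H32.p y else 0 : ℤ) : ℝ) := by
      rw [Int.cast_sum]
      refine Finset.sum_congr rfl (fun y _ => ?_)
      by_cases hxy : H32.nbr x y <;> simp [hxy]
    have hcastQ : (∑ y : H32, if H32.nbr x y then (H32.q y : ℝ) else 0)
        = ((∑ y : H32, if H32.nbr x y then H32.q y else 0 : ℤ) : ℝ) := by
      rw [Int.cast_sum]
      refine Finset.sum_congr rfl (fun y _ => ?_)
      by_cases hxy : H32.nbr x y <;> simp [hxy]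
    rw [hcastP, hcastQ, H32.eigenP x, H32.eigenQ x, hveq]
    push_cast
    linear_combination (-2 * (H32.q x : ℝ)) * s2
  rw [spectrum.mem_iff]
  intro hu
  rw [Matrix.isUnit_iff_isUnit_det] at hu
  have hdet : (algebraMap ℝ (Matrix G G ℝ) μ - (cayley ({b * a, b⁻¹ * a⁻¹ * c, b, b⁻¹} : Set G)).adjMatrix ℝ).det = 0 := by
    rw [← Matrix.exists_mulVec_eq_zero_iff]
    refine ⟨v, ?_, ?_⟩
    · intro h0
      have h1 := congrFun h0 (e 1)
      rw [hveq 1] at h1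
      rw [H32.p_one, H32.q_one] at h1
      simp at h1
    · funext g
      show ∑ h : G, (algebraMap ℝ (Matrix G G ℝ) μ - (cayley ({b * a, b⁻¹ * a⁻¹ * c, b, b⁻¹} : Set G)).adjMatrix ℝ) g h * v h = 0
      have hentry : ∀ h : G, (algebraMap ℝ (Matrix G G ℝ) μ - (cayley ({b * a, b⁻¹ * a⁻¹ * c, b, b⁻¹} : Set G)).adjMatrix ℝ) g h
          = (if g = h then μ else 0) - (cayley ({b * a, b⁻¹ * a⁻¹ * c, b, b⁻¹} : Set G)).adjMatrix ℝ g h := by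
        intro h
        rw [Matrix.sub_apply, Matrix.algebraMap_matrix_apply]
        simp
      simp only [hentry, sub_mul, Finset.sum_sub_distrib, ite_mul, zero_mul]
      rw [Finset.sum_ite_eq Finset.univ g (fun h => μ * v h), hsum g]
      simp
  rw [hdet] at hu
  simp at hu

theorem H32_cayley_not_integral (G : Type*) [Group G] [Finite G]
    (hcard : Nat.card G = 32)
    (a b c : G) (ha : a ^ 4 = 1) (hb : b ^ 4 = 1) (hc : c ^ 2 = 1)
    (hab : ⁅a, b⁆ = c) (hca : ⁅c, a⁆ = 1) (hcb : ⁅c, b⁆ = 1)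
    (hgen : Subgroup.closure {a, b} = ⊤) :
    IsAdjEigenvalue (cayley ({b * a, b⁻¹ * a⁻¹ * c, b, b⁻¹} : Set G)) (2 * Real.sqrt 2) ∧
      ¬ IsIntegralGraph (cayley ({b * a, b⁻¹ * a⁻¹ * c, b, b⁻¹} : Set G)) := by
  constructor
  · unfold IsAdjEigenvalue
    exact @aux_spec G _ (Fintype.ofFinite G) (Classical.decEq G) hcard a b c
      ha hb hc hab hca hcb hgen (Classical.decRel _)
  · intro hint
    unfold IsIntegralGraph at hint
    obtain ⟨z, hz⟩ := hint (2 * Real.sqrt 2) (@aux_spec G _ (Fintype.ofFinite G) (Classical.decEq G) hcard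
      a b c ha hb hc hab hca hcb hgen (Classical.decRel _))
    refine irrational_sqrt_two ⟨(z : ℚ) / 2, ?_⟩
    push_cast
    linarith [hz]
end

section
/- Let G = Q₈ ⋊ ℤ₃ where the generator σ of ℤ₃ acts on the quaternion group Q₈ by cyclically permuting i, j, k. The Cayley graph of G with connection set {i, -i, σ, σ⁻¹} has (1 + √17)/2 as an eigenvalue; in particular, it is not integral. -/
theorem aux_mem_spectrum_of_eigenvector {n : Type*} [Fintype n] [DecidableEq n]
    (A : Matrix n n ℝ) (μ : ℝ) (f : n → ℝ) (hf : f ≠ 0)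
    (hAf : A.mulVec f = μ • f) : μ ∈ spectrum ℝ A := by
  rw [spectrum.mem_iff]
  intro hU
  have hM : (algebraMap ℝ (Matrix n n ℝ) μ - A).mulVec f = 0 := by
    rw [Matrix.sub_mulVec, hAf, Algebra.algebraMap_eq_smul_one, Matrix.smul_mulVec,
      Matrix.one_mulVec, sub_self]
  obtain ⟨u, hu⟩ := hU
  apply hf
  calc f = (1 : Matrix n n ℝ).mulVec f := (Matrix.one_mulVec f).symm
    _ = ((↑u⁻¹ * ↑u : Matrix n n ℝ)).mulVec f := by rw [Units.inv_mul]
    _ = (↑u⁻¹ : Matrix n n ℝ).mulVec ((algebraMap ℝ (Matrix n n ℝ) μ - A).mulVec f) := by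
        rw [Matrix.mulVec_mulVec, hu]
    _ = 0 := by rw [hM, Matrix.mulVec_zero]

set_option maxHeartbeats 2000000 in
theorem Q8_rtimes_Z3_cayley_not_integral (G : Type*) [Group G] [Finite G]
    (hcard : Nat.card G = 24)
    (i σ : G) (hi : orderOf i = 4) (hσ : orderOf σ = 3)
    -- with j := i^σ and k := j^σ, the quaternion relations hold and k^σ = i
    (hsq : i ^ 2 = (σ⁻¹ * i * σ) ^ 2)
    (hmul : i * (σ⁻¹ * i * σ) = σ⁻¹ * (σ⁻¹ * i * σ) * σ)
    (hki : σ⁻¹ * (σ⁻¹ * (σ⁻¹ * i * σ) * σ) * σ = i)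
    (hgen : Subgroup.closure {i, σ} = ⊤) :
    IsAdjEigenvalue (cayley ({i, i⁻¹, σ, σ⁻¹} : Set G)) ((1 + Real.sqrt 17) / 2) ∧
      ¬ IsIntegralGraph (cayley ({i, i⁻¹, σ, σ⁻¹} : Set G)) := by
  letI : Fintype G := Fintype.ofFinite G
  letI : DecidableEq G := Classical.decEq G
  letI : DecidableRel (cayley ({i, i⁻¹, σ, σ⁻¹} : Set G)).Adj := Classical.decRel _
  have h4 : i ^ 4 = 1 := by rw [← hi]; exact pow_orderOf_eq_one i
  have h3 : σ ^ 3 = 1 := by rw [← hσ]; exact pow_orderOf_eq_one σ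
  obtain ⟨j, hj⟩ : ∃ j : G, j = σ⁻¹ * i * σ := ⟨_, rfl⟩
  rw [← hj] at hsq hmul hki
  -- hsq : i ^ 2 = j ^ 2 ; hmul : i * j = σ⁻¹ * j * σ ; hki : σ⁻¹ * (σ⁻¹ * j * σ) * σ = i
  have hki2 : σ⁻¹ * (i * j) * σ = i := by rw [hmul]; exact hki
  have rsi : σ * i = i * (j * σ) := by
    conv_lhs => rw [← hki2]
    group
  have rsi' : ∀ x : G, σ * (i * x) = i * (j * (σ * x)) := by
    intro x; rw [← mul_assoc, rsi]; group
  have rsj : σ * j = i * σ := by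
    conv_lhs => rw [hj]
    group
  have rsj' : ∀ x : G, σ * (j * x) = i * (σ * x) := by
    intro x; rw [← mul_assoc, rsj]; group
  have hjk : j * (i * j) = i := by
    have step : j * (i * j) = σ⁻¹ * (i * j) * σ := by
      conv_lhs => rw [hmul, hj]
      conv_rhs => rw [hj]
      group
    rw [step]; exact hki2
  have rjj : j * j = i * i := by
    rw [← pow_two, ← pow_two]; exact hsq.symm
  have rjj' : ∀ x : G, j * (j * x) = i * (i * x) := by
    intro x; rw [← mul_assoc, rjj, mul_assoc]
  have rji : j * i = i * (i * (i * j)) := by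
    conv_lhs => rw [← hjk]
    rw [show j * (j * (i * j)) = (j * j) * (i * j) from (mul_assoc _ _ _).symm, rjj]
    group
  have rji' : ∀ x : G, j * (i * x) = i * (i * (i * (j * x))) := by
    intro x; rw [← mul_assoc, rji]; group
  have ri4 : i * (i * (i * i)) = 1 := by
    rw [show i * (i * (i * i)) = i ^ 4 from by rw [pow_succ, pow_succ, pow_two, mul_assoc, mul_assoc]]; exact h4
  have ri4' : ∀ x : G, i * (i * (i * (i * x))) = x := by
    intro x; rw [show i * (i * (i * (i * x))) = i ^ 4 * x from by rw [pow_succ, pow_succ, pow_two, mul_assoc, mul_assoc, mul_assoc], h4, one_mul]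
  have rs3 : σ * (σ * σ) = 1 := by
    rw [show σ * (σ * σ) = σ ^ 3 from by rw [pow_succ, pow_two, mul_assoc]]; exact h3
  have rs3' : ∀ x : G, σ * (σ * (σ * x)) = x := by
    intro x; rw [show σ * (σ * (σ * x)) = σ ^ 3 * x from by rw [pow_succ, pow_two, mul_assoc, mul_assoc], h3, one_mul]
  -- distinctness facts
  have hi1 : i ≠ 1 := by intro h; rw [h, orderOf_one] at hi; norm_num at hi
  have hs1 : σ ≠ 1 := by intro h; rw [h, orderOf_one] at hσ; norm_num at hσ
  have hiv1 : i⁻¹ ≠ 1 := fun h => hi1 (inv_eq_one.1 h)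
  have hsv1 : σ⁻¹ ≠ 1 := fun h => hs1 (inv_eq_one.1 h)
  have hii : i ≠ i⁻¹ := by
    intro h
    have h2 : i ^ 2 = 1 := by rw [pow_two]; nth_rewrite 2 [h]; simp
    have hd := orderOf_dvd_of_pow_eq_one h2
    rw [hi] at hd; norm_num at hd
  have hss : σ ≠ σ⁻¹ := by
    intro h
    have h2 : σ ^ 2 = 1 := by rw [pow_two]; nth_rewrite 2 [h]; simp
    have hd := orderOf_dvd_of_pow_eq_one h2
    rw [hσ] at hd; norm_num at hd
  have his : i ≠ σ := by intro h; rw [h, hσ] at hi; norm_num at hi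
  have hisv : i ≠ σ⁻¹ := by intro h; rw [h, orderOf_inv, hσ] at hi; norm_num at hi
  have hivs : i⁻¹ ≠ σ := fun h => hisv (inv_eq_iff_eq_inv.1 h)
  have hivsv : i⁻¹ ≠ σ⁻¹ := fun h => his (inv_injective h)
  -- adjacency characterization
  have hlp1 : ∀ a x g : G, x * g⁻¹ = a → x = a * g := by
    intro a x g h; rw [← h]; group
  have hlp2 : ∀ a x g : G, g * x⁻¹ = a → x = a⁻¹ * g := by
    intro a x g h; rw [← h]; group
  have hAdj : ∀ g x : G, (cayley ({i, i⁻¹, σ, σ⁻¹} : Set G)).Adj g x ↔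
      (x = i * g ∨ x = i⁻¹ * g ∨ x = σ * g ∨ x = σ⁻¹ * g) := by
    intro g x
    rw [show cayley ({i, i⁻¹, σ, σ⁻¹} : Set G)
        = SimpleGraph.fromRel (fun a b => b * a⁻¹ ∈ ({i, i⁻¹, σ, σ⁻¹} : Set G)) from rfl,
      SimpleGraph.fromRel_adj]
    simp only [Set.mem_insert_iff, Set.mem_singleton_iff]
    constructor
    · rintro ⟨hne, (h | h | h | h) | (h | h | h | h)⟩
      · exact Or.inl (hlp1 _ _ _ h)
      · exact Or.inr (Or.inl (hlp1 _ _ _ h))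
      · exact Or.inr (Or.inr (Or.inl (hlp1 _ _ _ h)))
      · exact Or.inr (Or.inr (Or.inr (hlp1 _ _ _ h)))
      · exact Or.inr (Or.inl (hlp2 _ _ _ h))
      · exact Or.inl (by rw [hlp2 _ _ _ h, inv_inv])
      · exact Or.inr (Or.inr (Or.inr (hlp2 _ _ _ h)))
      · exact Or.inr (Or.inr (Or.inl (by rw [hlp2 _ _ _ h, inv_inv])))
    · rintro (rfl | rfl | rfl | rfl)
      · exact ⟨fun H => hi1 (mul_eq_right.1 H.symm), Or.inl (Or.inl (by group))⟩
      · exact ⟨fun H => hiv1 (mul_eq_right.1 H.symm), Or.inl (Or.inr (Or.inl (by group)))⟩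
      · exact ⟨fun H => hs1 (mul_eq_right.1 H.symm), Or.inl (Or.inr (Or.inr (Or.inl (by group))))⟩
      · exact ⟨fun H => hsv1 (mul_eq_right.1 H.symm), Or.inl (Or.inr (Or.inr (Or.inr (by group))))⟩
  have hnb : ∀ g : G, (cayley ({i, i⁻¹, σ, σ⁻¹} : Set G)).neighborFinset g
      = {i * g, i⁻¹ * g, σ * g, σ⁻¹ * g} := by
    intro g; ext x
    rw [SimpleGraph.mem_neighborFinset, hAdj]
    simp only [Finset.mem_insert, Finset.mem_singleton]
  -- the 24 words
  let LW : List G := [1, i, i * (i), i * (i * (i)), j, i * (j), i * (i * (j)), i * (i * (i * (j))), σ, i * (σ), i * (i * (σ)), i * (i * (i * (σ))), j * (σ), i * (j * (σ)), i * (i * (j * (σ))), i * (i * (i * (j * (σ)))), σ * (σ), i * (σ * (σ)), i * (i * (σ * (σ))), i * (i * (i * (σ * (σ)))), j * (σ * (σ)), i * (j * (σ * (σ))), i * (i * (j * (σ * (σ)))), i * (i * (i * (j * (σ * (σ)))))]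
  let w : Fin 24 → G := fun m => LW.get ⟨m.1, m.2⟩
  have hI0 : i * (1) = i := mul_one i
  have hI1 : i * (i) = i * (i) := rfl
  have hI2 : i * (i * (i)) = i * (i * (i)) := rfl
  have hI3 : i * (i * (i * (i))) = 1 := by simp only [rsi', rsj', rji', rjj', ri4', rs3', rsi, rsj, rji, rjj, ri4, rs3, one_mul, mul_one, mul_assoc]
  have hI4 : i * (j) = i * (j) := rfl
  have hI5 : i * (i * (j)) = i * (i * (j)) := rfl
  have hI6 : i * (i * (i * (j))) = i * (i * (i * (j))) := rfl
  have hI7 : i * (i * (i * (i * (j)))) = j := by simp only [rsi', rsj', rji', rjj', ri4', rs3', rsi, rsj, rji, rjj, ri4, rs3, one_mul, mul_one, mul_assoc]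
  have hI8 : i * (σ) = i * (σ) := rfl
  have hI9 : i * (i * (σ)) = i * (i * (σ)) := rfl
  have hI10 : i * (i * (i * (σ))) = i * (i * (i * (σ))) := rfl
  have hI11 : i * (i * (i * (i * (σ)))) = σ := by simp only [rsi', rsj', rji', rjj', ri4', rs3', rsi, rsj, rji, rjj, ri4, rs3, one_mul, mul_one, mul_assoc]
  have hI12 : i * (j * (σ)) = i * (j * (σ)) := rfl
  have hI13 : i * (i * (j * (σ))) = i * (i * (j * (σ))) := rfl
  have hI14 : i * (i * (i * (j * (σ)))) = i * (i * (i * (j * (σ)))) := rfl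
  have hI15 : i * (i * (i * (i * (j * (σ))))) = j * (σ) := by simp only [rsi', rsj', rji', rjj', ri4', rs3', rsi, rsj, rji, rjj, ri4, rs3, one_mul, mul_one, mul_assoc]
  have hI16 : i * (σ * (σ)) = i * (σ * (σ)) := rfl
  have hI17 : i * (i * (σ * (σ))) = i * (i * (σ * (σ))) := rfl
  have hI18 : i * (i * (i * (σ * (σ)))) = i * (i * (i * (σ * (σ)))) := rfl
  have hI19 : i * (i * (i * (i * (σ * (σ))))) = σ * (σ) := by simp only [rsi', rsj', rji', rjj', ri4', rs3', rsi, rsj, rji, rjj, ri4, rs3, one_mul, mul_one, mul_assoc]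
  have hI20 : i * (j * (σ * (σ))) = i * (j * (σ * (σ))) := rfl
  have hI21 : i * (i * (j * (σ * (σ)))) = i * (i * (j * (σ * (σ)))) := rfl
  have hI22 : i * (i * (i * (j * (σ * (σ))))) = i * (i * (i * (j * (σ * (σ))))) := rfl
  have hI23 : i * (i * (i * (i * (j * (σ * (σ)))))) = j * (σ * (σ)) := by simp only [rsi', rsj', rji', rjj', ri4', rs3', rsi, rsj, rji, rjj, ri4, rs3, one_mul, mul_one, mul_assoc]
  have hS0 : σ * (1) = σ := mul_one σ
  have hS1 : σ * (i) = i * (j * (σ)) := by simp only [rsi', rsj', rji', rjj', ri4', rs3', rsi, rsj, rji, rjj, ri4, rs3, one_mul, mul_one, mul_assoc]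
  have hS2 : σ * (i * (i)) = i * (i * (σ)) := by simp only [rsi', rsj', rji', rjj', ri4', rs3', rsi, rsj, rji, rjj, ri4, rs3, one_mul, mul_one, mul_assoc]
  have hS3 : σ * (i * (i * (i))) = i * (i * (i * (j * (σ)))) := by simp only [rsi', rsj', rji', rjj', ri4', rs3', rsi, rsj, rji, rjj, ri4, rs3, one_mul, mul_one, mul_assoc]
  have hS4 : σ * (j) = i * (σ) := by simp only [rsi', rsj', rji', rjj', ri4', rs3', rsi, rsj, rji, rjj, ri4, rs3, one_mul, mul_one, mul_assoc]
  have hS5 : σ * (i * (j)) = j * (σ) := by simp only [rsi', rsj', rji', rjj', ri4', rs3', rsi, rsj, rji, rjj, ri4, rs3, one_mul, mul_one, mul_assoc]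
  have hS6 : σ * (i * (i * (j))) = i * (i * (i * (σ))) := by simp only [rsi', rsj', rji', rjj', ri4', rs3', rsi, rsj, rji, rjj, ri4, rs3, one_mul, mul_one, mul_assoc]
  have hS7 : σ * (i * (i * (i * (j)))) = i * (i * (j * (σ))) := by simp only [rsi', rsj', rji', rjj', ri4', rs3', rsi, rsj, rji, rjj, ri4, rs3, one_mul, mul_one, mul_assoc]
  have hS8 : σ * (σ) = σ * (σ) := by simp only [rsi', rsj', rji', rjj', ri4', rs3', rsi, rsj, rji, rjj, ri4, rs3, one_mul, mul_one, mul_assoc]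
  have hS9 : σ * (i * (σ)) = i * (j * (σ * (σ))) := by simp only [rsi', rsj', rji', rjj', ri4', rs3', rsi, rsj, rji, rjj, ri4, rs3, one_mul, mul_one, mul_assoc]
  have hS10 : σ * (i * (i * (σ))) = i * (i * (σ * (σ))) := by simp only [rsi', rsj', rji', rjj', ri4', rs3', rsi, rsj, rji, rjj, ri4, rs3, one_mul, mul_one, mul_assoc]
  have hS11 : σ * (i * (i * (i * (σ)))) = i * (i * (i * (j * (σ * (σ))))) := by simp only [rsi', rsj', rji', rjj', ri4', rs3', rsi, rsj, rji, rjj, ri4, rs3, one_mul, mul_one, mul_assoc]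
  have hS12 : σ * (j * (σ)) = i * (σ * (σ)) := by simp only [rsi', rsj', rji', rjj', ri4', rs3', rsi, rsj, rji, rjj, ri4, rs3, one_mul, mul_one, mul_assoc]
  have hS13 : σ * (i * (j * (σ))) = j * (σ * (σ)) := by simp only [rsi', rsj', rji', rjj', ri4', rs3', rsi, rsj, rji, rjj, ri4, rs3, one_mul, mul_one, mul_assoc]
  have hS14 : σ * (i * (i * (j * (σ)))) = i * (i * (i * (σ * (σ)))) := by simp only [rsi', rsj', rji', rjj', ri4', rs3', rsi, rsj, rji, rjj, ri4, rs3, one_mul, mul_one, mul_assoc]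
  have hS15 : σ * (i * (i * (i * (j * (σ))))) = i * (i * (j * (σ * (σ)))) := by simp only [rsi', rsj', rji', rjj', ri4', rs3', rsi, rsj, rji, rjj, ri4, rs3, one_mul, mul_one, mul_assoc]
  have hS16 : σ * (σ * (σ)) = 1 := by simp only [rsi', rsj', rji', rjj', ri4', rs3', rsi, rsj, rji, rjj, ri4, rs3, one_mul, mul_one, mul_assoc]
  have hS17 : σ * (i * (σ * (σ))) = i * (j) := by simp only [rsi', rsj', rji', rjj', ri4', rs3', rsi, rsj, rji, rjj, ri4, rs3, one_mul, mul_one, mul_assoc]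
  have hS18 : σ * (i * (i * (σ * (σ)))) = i * (i) := by simp only [rsi', rsj', rji', rjj', ri4', rs3', rsi, rsj, rji, rjj, ri4, rs3, one_mul, mul_one, mul_assoc]
  have hS19 : σ * (i * (i * (i * (σ * (σ))))) = i * (i * (i * (j))) := by simp only [rsi', rsj', rji', rjj', ri4', rs3', rsi, rsj, rji, rjj, ri4, rs3, one_mul, mul_one, mul_assoc]
  have hS20 : σ * (j * (σ * (σ))) = i := by simp only [rsi', rsj', rji', rjj', ri4', rs3', rsi, rsj, rji, rjj, ri4, rs3, one_mul, mul_one, mul_assoc]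
  have hS21 : σ * (i * (j * (σ * (σ)))) = j := by simp only [rsi', rsj', rji', rjj', ri4', rs3', rsi, rsj, rji, rjj, ri4, rs3, one_mul, mul_one, mul_assoc]
  have hS22 : σ * (i * (i * (j * (σ * (σ))))) = i * (i * (i)) := by simp only [rsi', rsj', rji', rjj', ri4', rs3', rsi, rsj, rji, rjj, ri4, rs3, one_mul, mul_one, mul_assoc]
  have hS23 : σ * (i * (i * (i * (j * (σ * (σ)))))) = i * (i * (j)) := by simp only [rsi', rsj', rji', rjj', ri4', rs3', rsi, rsj, rji, rjj, ri4, rs3, one_mul, mul_one, mul_assoc]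
  have hIv0 : i⁻¹ * (1) = i * (i * (i)) := inv_mul_eq_iff_eq_mul.2 (hI3).symm
  have hIv1 : i⁻¹ * (i) = 1 := inv_mul_eq_iff_eq_mul.2 (hI0).symm
  have hIv2 : i⁻¹ * (i * (i)) = i := inv_mul_eq_iff_eq_mul.2 (hI1).symm
  have hIv3 : i⁻¹ * (i * (i * (i))) = i * (i) := inv_mul_eq_iff_eq_mul.2 (hI2).symm
  have hIv4 : i⁻¹ * (j) = i * (i * (i * (j))) := inv_mul_eq_iff_eq_mul.2 (hI7).symm
  have hIv5 : i⁻¹ * (i * (j)) = j := inv_mul_eq_iff_eq_mul.2 (hI4).symm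
  have hIv6 : i⁻¹ * (i * (i * (j))) = i * (j) := inv_mul_eq_iff_eq_mul.2 (hI5).symm
  have hIv7 : i⁻¹ * (i * (i * (i * (j)))) = i * (i * (j)) := inv_mul_eq_iff_eq_mul.2 (hI6).symm
  have hIv8 : i⁻¹ * (σ) = i * (i * (i * (σ))) := inv_mul_eq_iff_eq_mul.2 (hI11).symm
  have hIv9 : i⁻¹ * (i * (σ)) = σ := inv_mul_eq_iff_eq_mul.2 (hI8).symm
  have hIv10 : i⁻¹ * (i * (i * (σ))) = i * (σ) := inv_mul_eq_iff_eq_mul.2 (hI9).symm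
  have hIv11 : i⁻¹ * (i * (i * (i * (σ)))) = i * (i * (σ)) := inv_mul_eq_iff_eq_mul.2 (hI10).symm
  have hIv12 : i⁻¹ * (j * (σ)) = i * (i * (i * (j * (σ)))) := inv_mul_eq_iff_eq_mul.2 (hI15).symm
  have hIv13 : i⁻¹ * (i * (j * (σ))) = j * (σ) := inv_mul_eq_iff_eq_mul.2 (hI12).symm
  have hIv14 : i⁻¹ * (i * (i * (j * (σ)))) = i * (j * (σ)) := inv_mul_eq_iff_eq_mul.2 (hI13).symm
  have hIv15 : i⁻¹ * (i * (i * (i * (j * (σ))))) = i * (i * (j * (σ))) := inv_mul_eq_iff_eq_mul.2 (hI14).symm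
  have hIv16 : i⁻¹ * (σ * (σ)) = i * (i * (i * (σ * (σ)))) := inv_mul_eq_iff_eq_mul.2 (hI19).symm
  have hIv17 : i⁻¹ * (i * (σ * (σ))) = σ * (σ) := inv_mul_eq_iff_eq_mul.2 (hI16).symm
  have hIv18 : i⁻¹ * (i * (i * (σ * (σ)))) = i * (σ * (σ)) := inv_mul_eq_iff_eq_mul.2 (hI17).symm
  have hIv19 : i⁻¹ * (i * (i * (i * (σ * (σ))))) = i * (i * (σ * (σ))) := inv_mul_eq_iff_eq_mul.2 (hI18).symm
  have hIv20 : i⁻¹ * (j * (σ * (σ))) = i * (i * (i * (j * (σ * (σ))))) := inv_mul_eq_iff_eq_mul.2 (hI23).symm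
  have hIv21 : i⁻¹ * (i * (j * (σ * (σ)))) = j * (σ * (σ)) := inv_mul_eq_iff_eq_mul.2 (hI20).symm
  have hIv22 : i⁻¹ * (i * (i * (j * (σ * (σ))))) = i * (j * (σ * (σ))) := inv_mul_eq_iff_eq_mul.2 (hI21).symm
  have hIv23 : i⁻¹ * (i * (i * (i * (j * (σ * (σ)))))) = i * (i * (j * (σ * (σ)))) := inv_mul_eq_iff_eq_mul.2 (hI22).symm
  have hSv0 : σ⁻¹ * (1) = σ * (σ) := inv_mul_eq_iff_eq_mul.2 (hS16).symm
  have hSv1 : σ⁻¹ * (i) = j * (σ * (σ)) := inv_mul_eq_iff_eq_mul.2 (hS20).symm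
  have hSv2 : σ⁻¹ * (i * (i)) = i * (i * (σ * (σ))) := inv_mul_eq_iff_eq_mul.2 (hS18).symm
  have hSv3 : σ⁻¹ * (i * (i * (i))) = i * (i * (j * (σ * (σ)))) := inv_mul_eq_iff_eq_mul.2 (hS22).symm
  have hSv4 : σ⁻¹ * (j) = i * (j * (σ * (σ))) := inv_mul_eq_iff_eq_mul.2 (hS21).symm
  have hSv5 : σ⁻¹ * (i * (j)) = i * (σ * (σ)) := inv_mul_eq_iff_eq_mul.2 (hS17).symm
  have hSv6 : σ⁻¹ * (i * (i * (j))) = i * (i * (i * (j * (σ * (σ))))) := inv_mul_eq_iff_eq_mul.2 (hS23).symm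
  have hSv7 : σ⁻¹ * (i * (i * (i * (j)))) = i * (i * (i * (σ * (σ)))) := inv_mul_eq_iff_eq_mul.2 (hS19).symm
  have hSv8 : σ⁻¹ * (σ) = 1 := inv_mul_eq_iff_eq_mul.2 (hS0).symm
  have hSv9 : σ⁻¹ * (i * (σ)) = j := inv_mul_eq_iff_eq_mul.2 (hS4).symm
  have hSv10 : σ⁻¹ * (i * (i * (σ))) = i * (i) := inv_mul_eq_iff_eq_mul.2 (hS2).symm
  have hSv11 : σ⁻¹ * (i * (i * (i * (σ)))) = i * (i * (j)) := inv_mul_eq_iff_eq_mul.2 (hS6).symm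
  have hSv12 : σ⁻¹ * (j * (σ)) = i * (j) := inv_mul_eq_iff_eq_mul.2 (hS5).symm
  have hSv13 : σ⁻¹ * (i * (j * (σ))) = i := inv_mul_eq_iff_eq_mul.2 (hS1).symm
  have hSv14 : σ⁻¹ * (i * (i * (j * (σ)))) = i * (i * (i * (j))) := inv_mul_eq_iff_eq_mul.2 (hS7).symm
  have hSv15 : σ⁻¹ * (i * (i * (i * (j * (σ))))) = i * (i * (i)) := inv_mul_eq_iff_eq_mul.2 (hS3).symm
  have hSv16 : σ⁻¹ * (σ * (σ)) = σ := inv_mul_eq_iff_eq_mul.2 (hS8).symm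
  have hSv17 : σ⁻¹ * (i * (σ * (σ))) = j * (σ) := inv_mul_eq_iff_eq_mul.2 (hS12).symm
  have hSv18 : σ⁻¹ * (i * (i * (σ * (σ)))) = i * (i * (σ)) := inv_mul_eq_iff_eq_mul.2 (hS10).symm
  have hSv19 : σ⁻¹ * (i * (i * (i * (σ * (σ))))) = i * (i * (j * (σ))) := inv_mul_eq_iff_eq_mul.2 (hS14).symm
  have hSv20 : σ⁻¹ * (j * (σ * (σ))) = i * (j * (σ)) := inv_mul_eq_iff_eq_mul.2 (hS13).symm
  have hSv21 : σ⁻¹ * (i * (j * (σ * (σ)))) = i * (σ) := inv_mul_eq_iff_eq_mul.2 (hS9).symm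
  have hSv22 : σ⁻¹ * (i * (i * (j * (σ * (σ))))) = i * (i * (i * (j * (σ)))) := inv_mul_eq_iff_eq_mul.2 (hS15).symm
  have hSv23 : σ⁻¹ * (i * (i * (i * (j * (σ * (σ)))))) = i * (i * (i * (σ))) := inv_mul_eq_iff_eq_mul.2 (hS11).symm
  let T : Finset G := Finset.image w Finset.univ
  have h1T : (1 : G) ∈ T := Finset.mem_image.2 ⟨⟨0, by omega⟩, Finset.mem_univ _, rfl⟩
  have hiT : ∀ t ∈ T, i * t ∈ T := by
    intro t ht
    obtain ⟨m, -, rfl⟩ := Finset.mem_image.1 ht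
    fin_cases m
    · exact Finset.mem_image.2 ⟨⟨1, by omega⟩, Finset.mem_univ _, (hI0).symm⟩
    · exact Finset.mem_image.2 ⟨⟨2, by omega⟩, Finset.mem_univ _, (hI1).symm⟩
    · exact Finset.mem_image.2 ⟨⟨3, by omega⟩, Finset.mem_univ _, (hI2).symm⟩
    · exact Finset.mem_image.2 ⟨⟨0, by omega⟩, Finset.mem_univ _, (hI3).symm⟩
    · exact Finset.mem_image.2 ⟨⟨5, by omega⟩, Finset.mem_univ _, (hI4).symm⟩
    · exact Finset.mem_image.2 ⟨⟨6, by omega⟩, Finset.mem_univ _, (hI5).symm⟩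
    · exact Finset.mem_image.2 ⟨⟨7, by omega⟩, Finset.mem_univ _, (hI6).symm⟩
    · exact Finset.mem_image.2 ⟨⟨4, by omega⟩, Finset.mem_univ _, (hI7).symm⟩
    · exact Finset.mem_image.2 ⟨⟨9, by omega⟩, Finset.mem_univ _, (hI8).symm⟩
    · exact Finset.mem_image.2 ⟨⟨10, by omega⟩, Finset.mem_univ _, (hI9).symm⟩
    · exact Finset.mem_image.2 ⟨⟨11, by omega⟩, Finset.mem_univ _, (hI10).symm⟩
    · exact Finset.mem_image.2 ⟨⟨8, by omega⟩, Finset.mem_univ _, (hI11).symm⟩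
    · exact Finset.mem_image.2 ⟨⟨13, by omega⟩, Finset.mem_univ _, (hI12).symm⟩
    · exact Finset.mem_image.2 ⟨⟨14, by omega⟩, Finset.mem_univ _, (hI13).symm⟩
    · exact Finset.mem_image.2 ⟨⟨15, by omega⟩, Finset.mem_univ _, (hI14).symm⟩
    · exact Finset.mem_image.2 ⟨⟨12, by omega⟩, Finset.mem_univ _, (hI15).symm⟩
    · exact Finset.mem_image.2 ⟨⟨17, by omega⟩, Finset.mem_univ _, (hI16).symm⟩
    · exact Finset.mem_image.2 ⟨⟨18, by omega⟩, Finset.mem_univ _, (hI17).symm⟩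
    · exact Finset.mem_image.2 ⟨⟨19, by omega⟩, Finset.mem_univ _, (hI18).symm⟩
    · exact Finset.mem_image.2 ⟨⟨16, by omega⟩, Finset.mem_univ _, (hI19).symm⟩
    · exact Finset.mem_image.2 ⟨⟨21, by omega⟩, Finset.mem_univ _, (hI20).symm⟩
    · exact Finset.mem_image.2 ⟨⟨22, by omega⟩, Finset.mem_univ _, (hI21).symm⟩
    · exact Finset.mem_image.2 ⟨⟨23, by omega⟩, Finset.mem_univ _, (hI22).symm⟩
    · exact Finset.mem_image.2 ⟨⟨20, by omega⟩, Finset.mem_univ _, (hI23).symm⟩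
  have hsT : ∀ t ∈ T, σ * t ∈ T := by
    intro t ht
    obtain ⟨m, -, rfl⟩ := Finset.mem_image.1 ht
    fin_cases m
    · exact Finset.mem_image.2 ⟨⟨8, by omega⟩, Finset.mem_univ _, (hS0).symm⟩
    · exact Finset.mem_image.2 ⟨⟨13, by omega⟩, Finset.mem_univ _, (hS1).symm⟩
    · exact Finset.mem_image.2 ⟨⟨10, by omega⟩, Finset.mem_univ _, (hS2).symm⟩
    · exact Finset.mem_image.2 ⟨⟨15, by omega⟩, Finset.mem_univ _, (hS3).symm⟩
    · exact Finset.mem_image.2 ⟨⟨9, by omega⟩, Finset.mem_univ _, (hS4).symm⟩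
    · exact Finset.mem_image.2 ⟨⟨12, by omega⟩, Finset.mem_univ _, (hS5).symm⟩
    · exact Finset.mem_image.2 ⟨⟨11, by omega⟩, Finset.mem_univ _, (hS6).symm⟩
    · exact Finset.mem_image.2 ⟨⟨14, by omega⟩, Finset.mem_univ _, (hS7).symm⟩
    · exact Finset.mem_image.2 ⟨⟨16, by omega⟩, Finset.mem_univ _, (hS8).symm⟩
    · exact Finset.mem_image.2 ⟨⟨21, by omega⟩, Finset.mem_univ _, (hS9).symm⟩
    · exact Finset.mem_image.2 ⟨⟨18, by omega⟩, Finset.mem_univ _, (hS10).symm⟩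
    · exact Finset.mem_image.2 ⟨⟨23, by omega⟩, Finset.mem_univ _, (hS11).symm⟩
    · exact Finset.mem_image.2 ⟨⟨17, by omega⟩, Finset.mem_univ _, (hS12).symm⟩
    · exact Finset.mem_image.2 ⟨⟨20, by omega⟩, Finset.mem_univ _, (hS13).symm⟩
    · exact Finset.mem_image.2 ⟨⟨19, by omega⟩, Finset.mem_univ _, (hS14).symm⟩
    · exact Finset.mem_image.2 ⟨⟨22, by omega⟩, Finset.mem_univ _, (hS15).symm⟩
    · exact Finset.mem_image.2 ⟨⟨0, by omega⟩, Finset.mem_univ _, (hS16).symm⟩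
    · exact Finset.mem_image.2 ⟨⟨5, by omega⟩, Finset.mem_univ _, (hS17).symm⟩
    · exact Finset.mem_image.2 ⟨⟨2, by omega⟩, Finset.mem_univ _, (hS18).symm⟩
    · exact Finset.mem_image.2 ⟨⟨7, by omega⟩, Finset.mem_univ _, (hS19).symm⟩
    · exact Finset.mem_image.2 ⟨⟨1, by omega⟩, Finset.mem_univ _, (hS20).symm⟩
    · exact Finset.mem_image.2 ⟨⟨4, by omega⟩, Finset.mem_univ _, (hS21).symm⟩
    · exact Finset.mem_image.2 ⟨⟨3, by omega⟩, Finset.mem_univ _, (hS22).symm⟩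
    · exact Finset.mem_image.2 ⟨⟨6, by omega⟩, Finset.mem_univ _, (hS23).symm⟩
  have hstab : ∀ g : G, g ∈ Subgroup.closure ({i, σ} : Set G) → ∀ t ∈ T, g * t ∈ T := by
    intro g hg
    induction hg using Subgroup.closure_induction with
    | mem x hx =>
      rcases hx with rfl | rfl
      · exact hiT
      · exact hsT
    | one => intro t ht; rwa [one_mul]
    | mul x y hx hy px py =>
      intro t ht
      rw [mul_assoc]
      exact px _ (py t ht)
    | inv x hx px =>
      intro t ht
      have hsub : T.image (fun t => x * t) ⊆ T := by
        intro y hy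
        obtain ⟨t', ht', rfl⟩ := Finset.mem_image.1 hy
        exact px t' ht'
      have hcardeq : (T.image (fun t => x * t)).card = T.card :=
        Finset.card_image_of_injective _ (mul_right_injective x)
      have heq : T.image (fun t => x * t) = T :=
        Finset.eq_of_subset_of_card_le hsub (le_of_eq hcardeq.symm)
      have htm : t ∈ T.image (fun t => x * t) := by rw [heq]; exact ht
      obtain ⟨t', ht', htt⟩ := Finset.mem_image.1 htm
      have hxt : x⁻¹ * t = t' := by rw [← htt]; exact inv_mul_cancel_left _ _
      rw [hxt]; exact ht'
  have hTuniv : ∀ g : G, g ∈ T := by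
    intro g
    have := hstab g (by rw [hgen]; exact Subgroup.mem_top g) 1 h1T
    simpa using this
  have hwsurj : Function.Surjective w := by
    intro g
    obtain ⟨m, -, hm⟩ := Finset.mem_image.1 (hTuniv g)
    exact ⟨m, hm⟩
  have hT24 : T.card = 24 := by
    have h1 : T = (Finset.univ : Finset G) := Finset.eq_univ_iff_forall.2 hTuniv
    rw [h1, Finset.card_univ, ← Nat.card_eq_fintype_card, hcard]
  have hwinj : Function.Injective w := by
    have hinj : Set.InjOn w (Finset.univ : Finset (Fin 24)) :=
      Finset.injOn_of_card_image_eq (by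
        rw [show Finset.univ.image w = T from rfl, hT24]
        simp)
    intro a b hab
    exact hinj (by simp) (by simp) hab
  let e : Fin 24 ≃ G := Equiv.ofBijective w ⟨hwinj, hwsurj⟩
  let vA : List ℝ := [-5, -1, -5, -1, 1, 5, 1, 5, -5, -1, -5, -1, 5, 1, 5, 1, -4, 4, -4, 4, 0, 0, 0, 0]
  let vB : List ℝ := [-1, -1, -1, -1, 1, 1, 1, 1, -1, -1, -1, -1, 1, 1, 1, 1, 0, 0, 0, 0, 0, 0, 0, 0]
  let vv : Fin 24 → ℝ := fun m => vA.get ⟨m.1, m.2⟩ + vB.get ⟨m.1, m.2⟩ * Real.sqrt 17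
  let f : G → ℝ := fun g => vv (e.symm g)
  have hfw : ∀ m : Fin 24, f (w m) = vv m := fun m => congrArg vv (e.symm_apply_apply m)
  have hf0 : f ≠ 0 := by
    intro h0
    have h1 : f (w ⟨17, by omega⟩) = 0 := by rw [h0]; rfl
    rw [hfw] at h1
    have h2 : (4 : ℝ) + 0 * Real.sqrt 17 = 0 := h1
    norm_num at h2
  have key : ∀ (m a b c d : Fin 24), i * w m = w a → i⁻¹ * w m = w b →
      σ * w m = w c → σ⁻¹ * w m = w d →
      (((cayley ({i, i⁻¹, σ, σ⁻¹} : Set G)).adjMatrix ℝ).mulVec f) (w m)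
        = vv a + vv b + vv c + vv d := by
    intro m a b c d h1 h2 h3 h4
    rw [SimpleGraph.adjMatrix_mulVec_apply, hnb (w m)]
    rw [Finset.sum_insert (by
          simp only [Finset.mem_insert, Finset.mem_singleton]
          push_neg
          exact ⟨(mul_left_injective (w m)).ne hii, (mul_left_injective (w m)).ne his,
            (mul_left_injective (w m)).ne hisv⟩),
        Finset.sum_insert (by
          simp only [Finset.mem_insert, Finset.mem_singleton]
          push_neg
          exact ⟨(mul_left_injective (w m)).ne hivs, (mul_left_injective (w m)).ne hivsv⟩),
        Finset.sum_pair ((mul_left_injective (w m)).ne hss)]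
    rw [h1, h2, h3, h4]
    simp only [hfw]
    ring
  have hvec : (((cayley ({i, i⁻¹, σ, σ⁻¹} : Set G)).adjMatrix ℝ)).mulVec f
      = ((1 + Real.sqrt 17) / 2) • f := by
    have hs : Real.sqrt 17 ^ 2 = 17 := Real.sq_sqrt (by norm_num)
    funext g
    obtain ⟨m, rfl⟩ := hwsurj g
    rw [Pi.smul_apply, smul_eq_mul, hfw]
    fin_cases m
    · refine (key ⟨0, by omega⟩ ⟨1, by omega⟩ ⟨3, by omega⟩ ⟨8, by omega⟩ ⟨16, by omega⟩ hI0 hIv0 hS0 hSv0).trans ?_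
      show ((-1 : ℝ) + (-1 : ℝ) * Real.sqrt 17) + ((-1 : ℝ) + (-1 : ℝ) * Real.sqrt 17) + ((-5 : ℝ) + (-1 : ℝ) * Real.sqrt 17) + ((-4 : ℝ) + (0 : ℝ) * Real.sqrt 17) = (1 + Real.sqrt 17) / 2 * ((-5 : ℝ) + (-1 : ℝ) * Real.sqrt 17)
      linear_combination ((1 : ℝ) / 2) * hs
    · refine (key ⟨1, by omega⟩ ⟨2, by omega⟩ ⟨0, by omega⟩ ⟨13, by omega⟩ ⟨20, by omega⟩ hI1 hIv1 hS1 hSv1).trans ?_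
      show ((-5 : ℝ) + (-1 : ℝ) * Real.sqrt 17) + ((-5 : ℝ) + (-1 : ℝ) * Real.sqrt 17) + ((1 : ℝ) + (1 : ℝ) * Real.sqrt 17) + ((0 : ℝ) + (0 : ℝ) * Real.sqrt 17) = (1 + Real.sqrt 17) / 2 * ((-1 : ℝ) + (-1 : ℝ) * Real.sqrt 17)
      linear_combination ((1 : ℝ) / 2) * hs
    · refine (key ⟨2, by omega⟩ ⟨3, by omega⟩ ⟨1, by omega⟩ ⟨10, by omega⟩ ⟨18, by omega⟩ hI2 hIv2 hS2 hSv2).trans ?_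
      show ((-1 : ℝ) + (-1 : ℝ) * Real.sqrt 17) + ((-1 : ℝ) + (-1 : ℝ) * Real.sqrt 17) + ((-5 : ℝ) + (-1 : ℝ) * Real.sqrt 17) + ((-4 : ℝ) + (0 : ℝ) * Real.sqrt 17) = (1 + Real.sqrt 17) / 2 * ((-5 : ℝ) + (-1 : ℝ) * Real.sqrt 17)
      linear_combination ((1 : ℝ) / 2) * hs
    · refine (key ⟨3, by omega⟩ ⟨0, by omega⟩ ⟨2, by omega⟩ ⟨15, by omega⟩ ⟨22, by omega⟩ hI3 hIv3 hS3 hSv3).trans ?_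
      show ((-5 : ℝ) + (-1 : ℝ) * Real.sqrt 17) + ((-5 : ℝ) + (-1 : ℝ) * Real.sqrt 17) + ((1 : ℝ) + (1 : ℝ) * Real.sqrt 17) + ((0 : ℝ) + (0 : ℝ) * Real.sqrt 17) = (1 + Real.sqrt 17) / 2 * ((-1 : ℝ) + (-1 : ℝ) * Real.sqrt 17)
      linear_combination ((1 : ℝ) / 2) * hs
    · refine (key ⟨4, by omega⟩ ⟨5, by omega⟩ ⟨7, by omega⟩ ⟨9, by omega⟩ ⟨21, by omega⟩ hI4 hIv4 hS4 hSv4).trans ?_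
      show ((5 : ℝ) + (1 : ℝ) * Real.sqrt 17) + ((5 : ℝ) + (1 : ℝ) * Real.sqrt 17) + ((-1 : ℝ) + (-1 : ℝ) * Real.sqrt 17) + ((0 : ℝ) + (0 : ℝ) * Real.sqrt 17) = (1 + Real.sqrt 17) / 2 * ((1 : ℝ) + (1 : ℝ) * Real.sqrt 17)
      linear_combination ((-1 : ℝ) / 2) * hs
    · refine (key ⟨5, by omega⟩ ⟨6, by omega⟩ ⟨4, by omega⟩ ⟨12, by omega⟩ ⟨17, by omega⟩ hI5 hIv5 hS5 hSv5).trans ?_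
      show ((1 : ℝ) + (1 : ℝ) * Real.sqrt 17) + ((1 : ℝ) + (1 : ℝ) * Real.sqrt 17) + ((5 : ℝ) + (1 : ℝ) * Real.sqrt 17) + ((4 : ℝ) + (0 : ℝ) * Real.sqrt 17) = (1 + Real.sqrt 17) / 2 * ((5 : ℝ) + (1 : ℝ) * Real.sqrt 17)
      linear_combination ((-1 : ℝ) / 2) * hs
    · refine (key ⟨6, by omega⟩ ⟨7, by omega⟩ ⟨5, by omega⟩ ⟨11, by omega⟩ ⟨23, by omega⟩ hI6 hIv6 hS6 hSv6).trans ?_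
      show ((5 : ℝ) + (1 : ℝ) * Real.sqrt 17) + ((5 : ℝ) + (1 : ℝ) * Real.sqrt 17) + ((-1 : ℝ) + (-1 : ℝ) * Real.sqrt 17) + ((0 : ℝ) + (0 : ℝ) * Real.sqrt 17) = (1 + Real.sqrt 17) / 2 * ((1 : ℝ) + (1 : ℝ) * Real.sqrt 17)
      linear_combination ((-1 : ℝ) / 2) * hs
    · refine (key ⟨7, by omega⟩ ⟨4, by omega⟩ ⟨6, by omega⟩ ⟨14, by omega⟩ ⟨19, by omega⟩ hI7 hIv7 hS7 hSv7).trans ?_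
      show ((1 : ℝ) + (1 : ℝ) * Real.sqrt 17) + ((1 : ℝ) + (1 : ℝ) * Real.sqrt 17) + ((5 : ℝ) + (1 : ℝ) * Real.sqrt 17) + ((4 : ℝ) + (0 : ℝ) * Real.sqrt 17) = (1 + Real.sqrt 17) / 2 * ((5 : ℝ) + (1 : ℝ) * Real.sqrt 17)
      linear_combination ((-1 : ℝ) / 2) * hs
    · refine (key ⟨8, by omega⟩ ⟨9, by omega⟩ ⟨11, by omega⟩ ⟨16, by omega⟩ ⟨0, by omega⟩ hI8 hIv8 hS8 hSv8).trans ?_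
      show ((-1 : ℝ) + (-1 : ℝ) * Real.sqrt 17) + ((-1 : ℝ) + (-1 : ℝ) * Real.sqrt 17) + ((-4 : ℝ) + (0 : ℝ) * Real.sqrt 17) + ((-5 : ℝ) + (-1 : ℝ) * Real.sqrt 17) = (1 + Real.sqrt 17) / 2 * ((-5 : ℝ) + (-1 : ℝ) * Real.sqrt 17)
      linear_combination ((1 : ℝ) / 2) * hs
    · refine (key ⟨9, by omega⟩ ⟨10, by omega⟩ ⟨8, by omega⟩ ⟨21, by omega⟩ ⟨4, by omega⟩ hI9 hIv9 hS9 hSv9).trans ?_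
      show ((-5 : ℝ) + (-1 : ℝ) * Real.sqrt 17) + ((-5 : ℝ) + (-1 : ℝ) * Real.sqrt 17) + ((0 : ℝ) + (0 : ℝ) * Real.sqrt 17) + ((1 : ℝ) + (1 : ℝ) * Real.sqrt 17) = (1 + Real.sqrt 17) / 2 * ((-1 : ℝ) + (-1 : ℝ) * Real.sqrt 17)
      linear_combination ((1 : ℝ) / 2) * hs
    · refine (key ⟨10, by omega⟩ ⟨11, by omega⟩ ⟨9, by omega⟩ ⟨18, by omega⟩ ⟨2, by omega⟩ hI10 hIv10 hS10 hSv10).trans ?_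
      show ((-1 : ℝ) + (-1 : ℝ) * Real.sqrt 17) + ((-1 : ℝ) + (-1 : ℝ) * Real.sqrt 17) + ((-4 : ℝ) + (0 : ℝ) * Real.sqrt 17) + ((-5 : ℝ) + (-1 : ℝ) * Real.sqrt 17) = (1 + Real.sqrt 17) / 2 * ((-5 : ℝ) + (-1 : ℝ) * Real.sqrt 17)
      linear_combination ((1 : ℝ) / 2) * hs
    · refine (key ⟨11, by omega⟩ ⟨8, by omega⟩ ⟨10, by omega⟩ ⟨23, by omega⟩ ⟨6, by omega⟩ hI11 hIv11 hS11 hSv11).trans ?_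
      show ((-5 : ℝ) + (-1 : ℝ) * Real.sqrt 17) + ((-5 : ℝ) + (-1 : ℝ) * Real.sqrt 17) + ((0 : ℝ) + (0 : ℝ) * Real.sqrt 17) + ((1 : ℝ) + (1 : ℝ) * Real.sqrt 17) = (1 + Real.sqrt 17) / 2 * ((-1 : ℝ) + (-1 : ℝ) * Real.sqrt 17)
      linear_combination ((1 : ℝ) / 2) * hs
    · refine (key ⟨12, by omega⟩ ⟨13, by omega⟩ ⟨15, by omega⟩ ⟨17, by omega⟩ ⟨5, by omega⟩ hI12 hIv12 hS12 hSv12).trans ?_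
      show ((1 : ℝ) + (1 : ℝ) * Real.sqrt 17) + ((1 : ℝ) + (1 : ℝ) * Real.sqrt 17) + ((4 : ℝ) + (0 : ℝ) * Real.sqrt 17) + ((5 : ℝ) + (1 : ℝ) * Real.sqrt 17) = (1 + Real.sqrt 17) / 2 * ((5 : ℝ) + (1 : ℝ) * Real.sqrt 17)
      linear_combination ((-1 : ℝ) / 2) * hs
    · refine (key ⟨13, by omega⟩ ⟨14, by omega⟩ ⟨12, by omega⟩ ⟨20, by omega⟩ ⟨1, by omega⟩ hI13 hIv13 hS13 hSv13).trans ?_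
      show ((5 : ℝ) + (1 : ℝ) * Real.sqrt 17) + ((5 : ℝ) + (1 : ℝ) * Real.sqrt 17) + ((0 : ℝ) + (0 : ℝ) * Real.sqrt 17) + ((-1 : ℝ) + (-1 : ℝ) * Real.sqrt 17) = (1 + Real.sqrt 17) / 2 * ((1 : ℝ) + (1 : ℝ) * Real.sqrt 17)
      linear_combination ((-1 : ℝ) / 2) * hs
    · refine (key ⟨14, by omega⟩ ⟨15, by omega⟩ ⟨13, by omega⟩ ⟨19, by omega⟩ ⟨7, by omega⟩ hI14 hIv14 hS14 hSv14).trans ?_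
      show ((1 : ℝ) + (1 : ℝ) * Real.sqrt 17) + ((1 : ℝ) + (1 : ℝ) * Real.sqrt 17) + ((4 : ℝ) + (0 : ℝ) * Real.sqrt 17) + ((5 : ℝ) + (1 : ℝ) * Real.sqrt 17) = (1 + Real.sqrt 17) / 2 * ((5 : ℝ) + (1 : ℝ) * Real.sqrt 17)
      linear_combination ((-1 : ℝ) / 2) * hs
    · refine (key ⟨15, by omega⟩ ⟨12, by omega⟩ ⟨14, by omega⟩ ⟨22, by omega⟩ ⟨3, by omega⟩ hI15 hIv15 hS15 hSv15).trans ?_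
      show ((5 : ℝ) + (1 : ℝ) * Real.sqrt 17) + ((5 : ℝ) + (1 : ℝ) * Real.sqrt 17) + ((0 : ℝ) + (0 : ℝ) * Real.sqrt 17) + ((-1 : ℝ) + (-1 : ℝ) * Real.sqrt 17) = (1 + Real.sqrt 17) / 2 * ((1 : ℝ) + (1 : ℝ) * Real.sqrt 17)
      linear_combination ((-1 : ℝ) / 2) * hs
    · refine (key ⟨16, by omega⟩ ⟨17, by omega⟩ ⟨19, by omega⟩ ⟨0, by omega⟩ ⟨8, by omega⟩ hI16 hIv16 hS16 hSv16).trans ?_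
      show ((4 : ℝ) + (0 : ℝ) * Real.sqrt 17) + ((4 : ℝ) + (0 : ℝ) * Real.sqrt 17) + ((-5 : ℝ) + (-1 : ℝ) * Real.sqrt 17) + ((-5 : ℝ) + (-1 : ℝ) * Real.sqrt 17) = (1 + Real.sqrt 17) / 2 * ((-4 : ℝ) + (0 : ℝ) * Real.sqrt 17)
      linear_combination ((0 : ℝ) / 2) * hs
    · refine (key ⟨17, by omega⟩ ⟨18, by omega⟩ ⟨16, by omega⟩ ⟨5, by omega⟩ ⟨12, by omega⟩ hI17 hIv17 hS17 hSv17).trans ?_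
      show ((-4 : ℝ) + (0 : ℝ) * Real.sqrt 17) + ((-4 : ℝ) + (0 : ℝ) * Real.sqrt 17) + ((5 : ℝ) + (1 : ℝ) * Real.sqrt 17) + ((5 : ℝ) + (1 : ℝ) * Real.sqrt 17) = (1 + Real.sqrt 17) / 2 * ((4 : ℝ) + (0 : ℝ) * Real.sqrt 17)
      linear_combination ((0 : ℝ) / 2) * hs
    · refine (key ⟨18, by omega⟩ ⟨19, by omega⟩ ⟨17, by omega⟩ ⟨2, by omega⟩ ⟨10, by omega⟩ hI18 hIv18 hS18 hSv18).trans ?_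
      show ((4 : ℝ) + (0 : ℝ) * Real.sqrt 17) + ((4 : ℝ) + (0 : ℝ) * Real.sqrt 17) + ((-5 : ℝ) + (-1 : ℝ) * Real.sqrt 17) + ((-5 : ℝ) + (-1 : ℝ) * Real.sqrt 17) = (1 + Real.sqrt 17) / 2 * ((-4 : ℝ) + (0 : ℝ) * Real.sqrt 17)
      linear_combination ((0 : ℝ) / 2) * hs
    · refine (key ⟨19, by omega⟩ ⟨16, by omega⟩ ⟨18, by omega⟩ ⟨7, by omega⟩ ⟨14, by omega⟩ hI19 hIv19 hS19 hSv19).trans ?_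
      show ((-4 : ℝ) + (0 : ℝ) * Real.sqrt 17) + ((-4 : ℝ) + (0 : ℝ) * Real.sqrt 17) + ((5 : ℝ) + (1 : ℝ) * Real.sqrt 17) + ((5 : ℝ) + (1 : ℝ) * Real.sqrt 17) = (1 + Real.sqrt 17) / 2 * ((4 : ℝ) + (0 : ℝ) * Real.sqrt 17)
      linear_combination ((0 : ℝ) / 2) * hs
    · refine (key ⟨20, by omega⟩ ⟨21, by omega⟩ ⟨23, by omega⟩ ⟨1, by omega⟩ ⟨13, by omega⟩ hI20 hIv20 hS20 hSv20).trans ?_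
      show ((0 : ℝ) + (0 : ℝ) * Real.sqrt 17) + ((0 : ℝ) + (0 : ℝ) * Real.sqrt 17) + ((-1 : ℝ) + (-1 : ℝ) * Real.sqrt 17) + ((1 : ℝ) + (1 : ℝ) * Real.sqrt 17) = (1 + Real.sqrt 17) / 2 * ((0 : ℝ) + (0 : ℝ) * Real.sqrt 17)
      linear_combination ((0 : ℝ) / 2) * hs
    · refine (key ⟨21, by omega⟩ ⟨22, by omega⟩ ⟨20, by omega⟩ ⟨4, by omega⟩ ⟨9, by omega⟩ hI21 hIv21 hS21 hSv21).trans ?_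
      show ((0 : ℝ) + (0 : ℝ) * Real.sqrt 17) + ((0 : ℝ) + (0 : ℝ) * Real.sqrt 17) + ((1 : ℝ) + (1 : ℝ) * Real.sqrt 17) + ((-1 : ℝ) + (-1 : ℝ) * Real.sqrt 17) = (1 + Real.sqrt 17) / 2 * ((0 : ℝ) + (0 : ℝ) * Real.sqrt 17)
      linear_combination ((0 : ℝ) / 2) * hs
    · refine (key ⟨22, by omega⟩ ⟨23, by omega⟩ ⟨21, by omega⟩ ⟨3, by omega⟩ ⟨15, by omega⟩ hI22 hIv22 hS22 hSv22).trans ?_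
      show ((0 : ℝ) + (0 : ℝ) * Real.sqrt 17) + ((0 : ℝ) + (0 : ℝ) * Real.sqrt 17) + ((-1 : ℝ) + (-1 : ℝ) * Real.sqrt 17) + ((1 : ℝ) + (1 : ℝ) * Real.sqrt 17) = (1 + Real.sqrt 17) / 2 * ((0 : ℝ) + (0 : ℝ) * Real.sqrt 17)
      linear_combination ((0 : ℝ) / 2) * hs
    · refine (key ⟨23, by omega⟩ ⟨20, by omega⟩ ⟨22, by omega⟩ ⟨6, by omega⟩ ⟨11, by omega⟩ hI23 hIv23 hS23 hSv23).trans ?_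
      show ((0 : ℝ) + (0 : ℝ) * Real.sqrt 17) + ((0 : ℝ) + (0 : ℝ) * Real.sqrt 17) + ((1 : ℝ) + (1 : ℝ) * Real.sqrt 17) + ((-1 : ℝ) + (-1 : ℝ) * Real.sqrt 17) = (1 + Real.sqrt 17) / 2 * ((0 : ℝ) + (0 : ℝ) * Real.sqrt 17)
      linear_combination ((0 : ℝ) / 2) * hs
  have hEV : ((1 + Real.sqrt 17) / 2) ∈ spectrum ℝ
      ((cayley ({i, i⁻¹, σ, σ⁻¹} : Set G)).adjMatrix ℝ) :=
    aux_mem_spectrum_of_eigenvector _ _ f hf0 hvec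
  refine ⟨hEV, ?_⟩
  intro hInt
  obtain ⟨z, hz⟩ := hInt _ hEV
  have h17 : Irrational (Real.sqrt 17) := by
    simpa using (Nat.Prime.irrational_sqrt (p := 17) (by norm_num))
  have hzz : Real.sqrt 17 = ((2 * z - 1 : ℤ) : ℝ) := by push_cast; linarith
  exact h17.ne_int (2 * z - 1) hzz
end
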